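/- arXiv:1104.0600 — 9 statements merged into one kernel-verified Lean document; each statement's English description precedes it below -/
import Mathlib

section
/- Let A be a stably dissipative real n×n matrix. Then there exists a positive diagonal matrix D = diag(d_1,…,d_n), with all d_i > 0, such that for every w ∈ ℝⁿ: if ∑_{i,j=1}^n (a_ij/d_i) w_i w_j = 0, then a_ii w_i = 0 for every i = 1,…,n. -/
open Matrix

/-- A real `n × n` matrix `A` is dissipative if there is a positive diagonal
matrix `D = diag d` such that `xᵀ A D x ≤ 0` for all `x`. -/
def IsDissipative {n : ℕ} (A : Matrix (Fin n) (Fin n) ℝ) : Prop :=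
  ∃ d : Fin n → ℝ, (∀ i, 0 < d i) ∧
    ∀ x : Fin n → ℝ, ∑ i, ∑ j, x i * A i j * d j * x j ≤ 0

/-- `A` is stably dissipative if every sufficiently small perturbation
(preserving the zero pattern) is dissipative. -/
def IsStablyDissipative {n : ℕ} (A : Matrix (Fin n) (Fin n) ℝ) : Prop :=
  ∃ ε > (0 : ℝ), ∀ B : Matrix (Fin n) (Fin n) ℝ,
    (∀ i j, B i j = 0 ↔ A i j = 0) → (∀ i j, |A i j - B i j| < ε) →
    IsDissipative B

/-- For a stably dissipative matrix `A` there is a positive diagonal matrix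
`D = diag d` such that `∑ (a_ij / d_i) w_i w_j = 0` forces `a_ii w_i = 0` for all `i`. -/
theorem stmt0 {n : ℕ} (A : Matrix (Fin n) (Fin n) ℝ)
    (hA : IsStablyDissipative A) :
    ∃ d : Fin n → ℝ, (∀ i, 0 < d i) ∧
      ∀ w : Fin n → ℝ,
        (∑ i, ∑ j, (A i j / d i) * w i * w j = 0) →
        ∀ i, A i i * w i = 0 := by
  obtain ⟨ε, hε, hA⟩ := hA
  set M : ℝ := (∑ i, |A i i|) + 1 with hMdef
  have hM1 : (1 : ℝ) ≤ M := by
    have : (0:ℝ) ≤ ∑ i, |A i i| := Finset.sum_nonneg fun i _ => abs_nonneg _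
    linarith
  have hMpos : (0:ℝ) < M := by linarith
  set δ : ℝ := min (1/2) (ε / M) with hδdef
  have hδpos : 0 < δ := lt_min (by norm_num) (div_pos hε hMpos)
  have hδhalf : δ ≤ 1/2 := min_le_left _ _
  have hδM : δ * M ≤ ε := by
    have h := min_le_right (1/2) (ε / M)
    calc δ * M ≤ (ε / M) * M := by nlinarith
    _ = ε := by field_simp
  set B : Matrix (Fin n) (Fin n) ℝ := fun i j => if i = j then (1 - δ) * A i j else A i j with hBdef
  have h1δ : (0:ℝ) < 1 - δ := by linarith
  have hpat : ∀ i j, B i j = 0 ↔ A i j = 0 := by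
    intro i j
    simp only [hBdef]
    split_ifs with h
    · constructor
      · intro h0
        rcases mul_eq_zero.1 h0 with h' | h'
        · linarith
        · exact h'
      · intro h0; rw [h0]; ring
    · exact Iff.rfl
  have hclose : ∀ i j, |A i j - B i j| < ε := by
    intro i j
    simp only [hBdef]
    split_ifs with h
    · have hAle : |A i j| ≤ M - 1 := by
        subst h
        have : |A i i| ≤ ∑ k, |A k k| :=
          Finset.single_le_sum (f := fun k => |A k k|) (fun k _ => abs_nonneg _)
            (Finset.mem_univ i)
        simp only [hMdef]; linarith
      have he : |A i j - (1 - δ) * A i j| = δ * |A i j| := by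
        rw [show A i j - (1 - δ) * A i j = δ * A i j by ring, abs_mul, abs_of_pos hδpos]
      rw [he]
      nlinarith [abs_nonneg (A i j)]
    · simpa using hε
  obtain ⟨d, hd, hB⟩ := hA B hpat hclose
  have hdne : ∀ i, d i ≠ 0 := fun i => (hd i).ne'
  -- diagonal entries of A are nonpositive
  have hdiag : ∀ k, A k k ≤ 0 := by
    intro k
    have h := hB (fun j => if j = k then 1 else 0)
    have hs : ∑ i, ∑ j, (if i = k then (1:ℝ) else 0) * B i j * d j * (if j = k then 1 else 0)
        = B k k * d k := by
      rw [Finset.sum_eq_single k]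
      · rw [Finset.sum_eq_single k]
        · simp
        · intro j _ hj; simp [hj]
        · simp
      · intro i _ hi
        apply Finset.sum_eq_zero
        intro j _
        simp [hi]
      · simp
    rw [hs] at h
    have hBkk : B k k ≤ 0 := by
      by_contra hc
      push_neg at hc
      nlinarith [hd k]
    have hBkk' : B k k = (1 - δ) * A k k := by simp [hBdef]
    nlinarith
  refine ⟨d, hd, ?_⟩
  intro w hw i
  have key := hB (fun i => w i / d i)
  have key2 : (∑ i, ∑ j, (A i j / d i) * w i * w j)
      - δ * ∑ i, A i i * (w i)^2 / d i ≤ 0 := by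
    calc (∑ i, ∑ j, (A i j / d i) * w i * w j) - δ * ∑ i, A i i * (w i)^2 / d i
        = ∑ i, ∑ j, (w i / d i) * B i j * d j * (w j / d j) := by
          rw [Finset.mul_sum, ← Finset.sum_sub_distrib]
          apply Finset.sum_congr rfl
          intro i _
          have hone : δ * (A i i * w i ^ 2 / d i)
              = ∑ j, if j = i then δ * (A i i * w i ^ 2 / d i) else 0 := by simp
          rw [hone, ← Finset.sum_sub_distrib]
          apply Finset.sum_congr rfl
          intro j _
          simp only [hBdef]
          by_cases h : i = j
          · subst h
            rw [if_pos rfl, if_pos rfl]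
            field_simp [hdne i]
          · rw [if_neg h, if_neg (Ne.symm h)]
            field_simp [hdne i, hdne j]
            ring
      _ ≤ 0 := key
  have hSnonneg : 0 ≤ ∑ i, A i i * (w i)^2 / d i := by
    rw [hw] at key2
    nlinarith
  have hterm : ∀ k ∈ Finset.univ, A k k * (w k)^2 / d k ≤ 0 := by
    intro k _
    apply div_nonpos_of_nonpos_of_nonneg
    · exact mul_nonpos_of_nonpos_of_nonneg (hdiag k) (sq_nonneg _)
    · exact (hd k).le
  have hS0 : ∑ i, A i i * (w i)^2 / d i = 0 :=
    le_antisymm (Finset.sum_nonpos hterm) hSnonneg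
  have hzero : A i i * (w i)^2 / d i = 0 :=
    (Finset.sum_eq_zero_iff_of_nonpos hterm).1 hS0 i (Finset.mem_univ i)
  have h2 : A i i * (w i)^2 = 0 := by
    field_simp at hzero
    exact (div_eq_zero_iff.1 hzero).resolve_right (hdne i)
  rcases mul_eq_zero.1 h2 with h | h
  · rw [h]; ring
  · have : w i = 0 := by
      have := sq_eq_zero_iff.1 h
      exact this
    rw [this]; ring
end

section
/- Let A be a dissipative real n×n matrix and q ∈ ℝⁿ₊. If x, y ∈ ℝⁿ₊ satisfy A(x − q) = 0, A(y − q) = 0, and ∑_{i=1}^n w_i log x_i = ∑_{i=1}^n w_i log y_i for every w ∈ Ker(Aᵀ), then x = y. (In other words, each leaf of the invariant foliation defined by the first integrals x ↦ ∑_i w_i log x_i, w ∈ Ker(Aᵀ), intersects the set of equilibria E_{A,q} = {x ∈ ℝⁿ₊ : A(x − q) = 0} in at most one point.) -/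
open Matrix

lemma key_pt (a b : ℝ) (ha : 0 < a) (hb : 0 < b)
    (h : (a - b) * (Real.log a - Real.log b) = 0) : a = b := by
  rcases lt_trichotomy a b with h1|h1|h1
  · have := Real.log_lt_log ha h1; nlinarith
  · exact h1
  · have := Real.log_lt_log hb h1; nlinarith

lemma key_nonneg (a b : ℝ) (ha : 0 < a) (hb : 0 < b) :
    0 ≤ (a - b) * (Real.log a - Real.log b) := by
  rcases lt_trichotomy a b with h1|h1|h1
  · have := Real.log_lt_log ha h1; nlinarith
  · simp [h1]
  · have := Real.log_lt_log hb h1; nlinarith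


/-- For a dissipative matrix `A` and `q` in the open positive orthant: if two
equilibria `x, y ∈ E_{A,q}` (i.e. positive points with `A(x-q) = 0 = A(y-q)`)
have the same values of all the first integrals `x ↦ ∑ i, w i * log (x i)`,
`w ∈ Ker(Aᵀ)`, then `x = y`.  In other words, each leaf of the invariant
foliation meets the equilibria set in at most one point. -/
theorem stmt3 {n : ℕ} (A : Matrix (Fin n) (Fin n) ℝ) (hA : IsDissipative A)
    (q x y : Fin n → ℝ)
    (hq : ∀ i, 0 < q i) (hx : ∀ i, 0 < x i) (hy : ∀ i, 0 < y i)
    (hex : A.mulVec (x - q) = 0) (hey : A.mulVec (y - q) = 0)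
    (hlog : ∀ w : Fin n → ℝ, Aᵀ.mulVec w = 0 →
      ∑ i, w i * Real.log (x i) = ∑ i, w i * Real.log (y i)) :
    x = y := by
  obtain ⟨d, hd, hQ⟩ := hA
  set M : Matrix (Fin n) (Fin n) ℝ := -(A * diagonal d + diagonal d * Aᵀ) with hM
  have quad : ∀ v : Fin n → ℝ,
      v ⬝ᵥ (A * diagonal d) *ᵥ v = ∑ i, ∑ j, v i * A i j * d j * v j := by
    intro v
    simp [dotProduct, mulVec, Finset.mul_sum, mul_diagonal, mul_assoc]
  have quad2 : ∀ v : Fin n → ℝ,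
      v ⬝ᵥ (diagonal d * Aᵀ) *ᵥ v = ∑ i, ∑ j, v i * A i j * d j * v j := by
    intro v
    rw [dotProduct_mulVec]
    have h : (diagonal d * Aᵀ) = (A * diagonal d)ᵀ := by
      simp [Matrix.transpose_mul, Matrix.diagonal_transpose]
    rw [h, vecMul_transpose, dotProduct_comm, quad v]
  have hMpsd : M.PosSemidef := by
    rw [posSemidef_iff_dotProduct_mulVec]
    constructor
    · show Mᴴ = M
      ext i j
      simp [hM, conjTranspose, Matrix.transpose_mul, Matrix.diagonal_transpose,
        transpose_apply, Matrix.add_apply, Matrix.neg_apply, add_comm]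
    · intro v
      simp only [star_trivial, hM, Matrix.neg_mulVec, dotProduct_neg,
        Matrix.add_mulVec, dotProduct_add]
      nlinarith [hQ v, quad v, quad2 v]
  -- A(x-y) = 0
  have hxy : A *ᵥ (x - y) = 0 := by
    have : A *ᵥ (x - q) - A *ᵥ (y - q) = A *ᵥ (x - y) := by
      rw [← Matrix.mulVec_sub]; congr 1; ext i; simp
    rw [← this, hex, hey, sub_zero]
  set u : Fin n → ℝ := fun i => (x i - y i) / d i with hu
  have hDu : (diagonal d) *ᵥ u = x - y := by
    ext i
    simp only [mulVec_diagonal, hu, Pi.sub_apply]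
    exact mul_div_cancel₀ _ (hd i).ne'
  have hADu : (A * diagonal d) *ᵥ u = 0 := by
    rw [← Matrix.mulVec_mulVec, hDu, hxy]
  have hquadzero : star u ⬝ᵥ M *ᵥ u = 0 := by
    simp only [star_trivial, hM, Matrix.neg_mulVec, dotProduct_neg,
      Matrix.add_mulVec, dotProduct_add, hADu, dotProduct_zero]
    rw [quad2 u, ← quad u, hADu, dotProduct_zero]
    ring
  have hMu : M *ᵥ u = 0 := (hMpsd.dotProduct_mulVec_zero_iff u).mp hquadzero
  -- deduce Aᵀ u = 0
  have hAtu : Aᵀ *ᵥ u = 0 := by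
    ext k
    have h0 : (M *ᵥ u) k = 0 := by rw [hMu]; rfl
    have h1 : ((diagonal d * Aᵀ) *ᵥ u) k = d k * (Aᵀ *ᵥ u) k := by
      rw [← Matrix.mulVec_mulVec, mulVec_diagonal]
    have h2 : ((A * diagonal d) *ᵥ u) k = 0 := by rw [hADu]; rfl
    simp only [hM, Matrix.neg_mulVec, Matrix.add_mulVec, Pi.neg_apply,
      Pi.add_apply, h1] at h0
    have : d k * (Aᵀ *ᵥ u) k = 0 := by
      rw [h2] at h0; linarith
    have hdk := (hd k).ne'
    simpa [Pi.zero_apply] using (mul_eq_zero.mp this).resolve_left hdk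
  -- use the first integral
  have hsum := hlog u hAtu
  have hsum0 : ∑ i, u i * (Real.log (x i) - Real.log (y i)) = 0 := by
    simp only [mul_sub, Finset.sum_sub_distrib, hsum, sub_self]
  have hterm : ∀ i ∈ Finset.univ, (0:ℝ) ≤ u i * (Real.log (x i) - Real.log (y i)) := by
    intro i _
    have := key_nonneg (x i) (y i) (hx i) (hy i)
    have : 0 ≤ ((x i - y i) * (Real.log (x i) - Real.log (y i))) / d i :=
      div_nonneg this (hd i).le
    simpa [hu, div_mul_eq_mul_div] using this
  have heach := (Finset.sum_eq_zero_iff_of_nonneg hterm).mp hsum0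
  funext i
  have h0 := heach i (Finset.mem_univ i)
  have : (x i - y i) * (Real.log (x i) - Real.log (y i)) = 0 := by
    have hdk := (hd i).ne'
    rw [hu] at h0
    simp only at h0
    rw [div_mul_eq_mul_div, div_eq_zero_iff] at h0
    exact h0.resolve_right hdk
  exact key_pt (x i) (y i) (hx i) (hy i) this
end

section
/- If A is a stably dissipative real n×n matrix, then every cycle of the graph G_A contains at least one strong link, i.e. an edge {i, j} with a_ii < 0 and a_jj < 0. -/
open Matrix

/-- The graph `G_A` of a matrix `A`: vertices `1, …, n`, with an edge between
`i ≠ j` iff `a_ij ≠ 0` or `a_ji ≠ 0`. -/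
def graphOf {n : ℕ} (A : Matrix (Fin n) (Fin n) ℝ) : SimpleGraph (Fin n) where
  Adj i j := i ≠ j ∧ (A i j ≠ 0 ∨ A j i ≠ 0)
  symm := ⟨fun _ _ h => ⟨h.1.symm, h.2.symm⟩⟩
  loopless := ⟨fun _ h => h.1 rfl⟩

private lemma coeff_zero' {c r : ℝ} (h : ∀ s : ℝ, c * s + r ≤ 0) : c = 0 := by
  by_contra hc
  have h2 := h ((1 - r) / c)
  have h3 : c * ((1 - r) / c) = 1 - r := by field_simp
  rw [h3] at h2
  linarith

private lemma diag_nonpos' {n : ℕ} (B : Matrix (Fin n) (Fin n) ℝ) (d : Fin n → ℝ)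
    (hd : ∀ i, 0 < d i)
    (hq : ∀ x : Fin n → ℝ, ∑ i, ∑ j, x i * B i j * d j * x j ≤ 0) (i : Fin n) :
    B i i ≤ 0 := by
  have h := hq (fun m => if m = i then 1 else 0)
  simp only [ite_mul, mul_ite, one_mul, mul_one, zero_mul, mul_zero,
    Finset.sum_ite_eq, Finset.sum_ite_eq', Finset.mem_univ, if_true] at h
  nlinarith [hd i]

private lemma two_point_sum' {n : ℕ} (B : Matrix (Fin n) (Fin n) ℝ) (d : Fin n → ℝ)
    {i j : Fin n} (hij : i ≠ j) (s t : ℝ) :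
    (∑ k, ∑ l, (fun m => if m = i then s else if m = j then t else 0) k * B k l * d l *
      (fun m => if m = i then s else if m = j then t else 0) l)
    = s * B i i * d i * s + s * B i j * d j * t + t * B j i * d i * s
      + t * B j j * d j * t := by
  have hsum : ∀ (g : Fin n → ℝ), (∀ k, k ≠ i → k ≠ j → g k = 0) →
      ∑ k, g k = g i + g j := by
    intro g hg
    rw [← Finset.sum_subset (Finset.subset_univ ({i, j} : Finset (Fin n)))
      (fun k _ hk => by
        simp only [Finset.mem_insert, Finset.mem_singleton] at hk
        push_neg at hk
        exact hg k hk.1 hk.2)]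
    exact Finset.sum_pair hij
  rw [hsum _ (fun k h1 h2 => by
    simp only [if_neg h1, if_neg h2]
    simp)]
  rw [hsum (fun l => _) (fun l h1 h2 => by simp only [if_neg h1, if_neg h2, mul_zero]),
    hsum (fun l => _) (fun l h1 h2 => by simp only [if_neg h1, if_neg h2, mul_zero])]
  simp only [if_pos rfl, if_neg hij, if_neg hij.symm, if_true]
  ring

private lemma edge_constraint' {n : ℕ} (B : Matrix (Fin n) (Fin n) ℝ) (d : Fin n → ℝ)
    (hq : ∀ x : Fin n → ℝ, ∑ i, ∑ j, x i * B i j * d j * x j ≤ 0)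
    {i j : Fin n} (hij : i ≠ j) (hwhite : B i i = 0 ∨ B j j = 0) :
    B i j * d j + B j i * d i = 0 := by
  have key : ∀ s t : ℝ, s * B i i * d i * s + s * B i j * d j * t + t * B j i * d i * s
      + t * B j j * d j * t ≤ 0 := by
    intro s t
    have h := hq (fun m => if m = i then s else if m = j then t else 0)
    rwa [two_point_sum' B d hij s t] at h
  rcases hwhite with h0 | h0
  · apply coeff_zero' (r := B j j * d j)
    intro s
    have h := key s 1
    rw [h0] at h
    calc (B i j * d j + B j i * d i) * s + B j j * d j
        = s * 0 * d i * s + s * B i j * d j * 1 + 1 * B j i * d i * s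
          + 1 * B j j * d j * 1 := by ring
      _ ≤ 0 := h
  · apply coeff_zero' (r := B i i * d i)
    intro t
    have h := key 1 t
    rw [h0] at h
    calc (B i j * d j + B j i * d i) * t + B i i * d i
        = 1 * B i i * d i * 1 + 1 * B i j * d j * t + t * B j i * d i * 1
          + t * 0 * d j * t := by ring
      _ ≤ 0 := h

private lemma walk_prod' {n : ℕ} {G : SimpleGraph (Fin n)} (B : Matrix (Fin n) (Fin n) ℝ)
    (d : Fin n → ℝ) {u v : Fin n} (p : G.Walk u v)
    (h : ∀ e ∈ p.darts, B e.fst e.snd * d e.snd + B e.snd e.fst * d e.fst = 0) :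
    d v * (p.darts.map (fun e => B e.fst e.snd)).prod
      = d u * (p.darts.map (fun e => -B e.snd e.fst)).prod := by
  induction p with
  | nil => simp
  | cons h' p ih =>
    rename_i a b c
    have hc : B a b * d b + B b a * d a = 0 := h ⟨(a, b), h'⟩ (by simp)
    have ih' := ih (fun e he => h e (by simp [he]))
    simp only [SimpleGraph.Walk.darts_cons, List.map_cons, List.prod_cons]
    show d c * (B a b * (p.darts.map (fun e => B e.fst e.snd)).prod)
      = d a * (-B b a * (p.darts.map (fun e => -B e.snd e.fst)).prod)
    linear_combination B a b * ih' + (p.darts.map (fun e => -B e.snd e.fst)).prod * hc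

/-- If `A` is stably dissipative, then every cycle of `G_A` contains a strong
link, i.e. an edge `{i, j}` with `a_ii < 0` and `a_jj < 0`. -/
theorem stmt4 {n : ℕ} (A : Matrix (Fin n) (Fin n) ℝ)
    (hA : IsStablyDissipative A) (v : Fin n)
    (w : (graphOf A).Walk v v) (hw : w.IsCycle) :
    ∃ i j : Fin n, s(i, j) ∈ w.edges ∧ A i i < 0 ∧ A j j < 0 := by
  by_contra hcon
  push_neg at hcon
  obtain ⟨ε, hε, hstab⟩ := hA
  have hAd : IsDissipative A := hstab A (fun i j => Iff.rfl) (fun i j => by simpa using hε)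
  obtain ⟨dA, hdA, hqA⟩ := hAd
  have hdiagA : ∀ i, A i i ≤ 0 := fun i => diag_nonpos' A dA hdA hqA i
  have hwhite : ∀ e ∈ w.darts, A e.fst e.fst = 0 ∨ A e.snd e.snd = 0 := by
    intro e he
    have hedge : s(e.fst, e.snd) ∈ w.edges := by
      rw [SimpleGraph.Walk.edges]
      exact List.mem_map_of_mem he
    have h := hcon e.fst e.snd hedge
    rcases lt_or_eq_of_le (hdiagA e.fst) with h1 | h1
    · exact Or.inr (le_antisymm (hdiagA _) (h h1))
    · exact Or.inl h1
  have hconA : ∀ e ∈ w.darts, A e.fst e.snd * dA e.snd + A e.snd e.fst * dA e.fst = 0 :=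
    fun e he => edge_constraint' A dA hqA e.adj.1 (hwhite e he)
  have hnzA : ∀ e ∈ w.darts, A e.fst e.snd ≠ 0 ∧ A e.snd e.fst ≠ 0 := by
    intro e he
    have hc := hconA e he
    have hd1 := (hdA e.fst).ne'
    have hd2 := (hdA e.snd).ne'
    have himp1 : A e.fst e.snd = 0 → A e.snd e.fst = 0 := by
      intro h0
      rw [h0] at hc
      have : A e.snd e.fst * dA e.fst = 0 := by linarith
      exact (mul_eq_zero.mp this).resolve_right hd1
    have himp2 : A e.snd e.fst = 0 → A e.fst e.snd = 0 := by
      intro h0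
      rw [h0] at hc
      have : A e.fst e.snd * dA e.snd = 0 := by linarith
      exact (mul_eq_zero.mp this).resolve_right hd2
    rcases e.adj.2 with h | h
    · exact ⟨h, fun h0 => h (himp2 h0)⟩
    · exact ⟨fun h0 => h (himp1 h0), h⟩
  cases w with
  | nil => exact hw.ne_nil rfl
  | @cons _ b _ hadj p =>
    have hvb : v ≠ b := hadj.1
    have hD0 : (⟨(v, b), hadj⟩ : (graphOf A).Dart) ∈ (SimpleGraph.Walk.cons hadj p).darts := by
      simp
    have hAvb : A v b ≠ 0 := (hnzA _ hD0).1
    set δ : ℝ := min 1 (ε / (|A v b| + 1)) with hδdef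
    have hδ : 0 < δ := lt_min one_pos (by positivity)
    have h1δ : (0:ℝ) < 1 + δ := by linarith
    set B : Matrix (Fin n) (Fin n) ℝ :=
      fun i j => if i = v ∧ j = b then (1 + δ) * A i j else A i j with hBdef
    have hBapp : ∀ i j, B i j = if i = v ∧ j = b then (1 + δ) * A i j else A i j :=
      fun i j => rfl
    have hpat : ∀ i j, B i j = 0 ↔ A i j = 0 := by
      intro i j
      rw [hBapp]
      by_cases h : i = v ∧ j = b
      · rw [if_pos h, mul_eq_zero]
        constructor
        · rintro (h1 | h1)
          · exact absurd h1 h1δ.ne'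
          · exact h1
        · exact Or.inr
      · rw [if_neg h]
    have hclose : ∀ i j, |A i j - B i j| < ε := by
      intro i j
      rw [hBapp]
      by_cases h : i = v ∧ j = b
      · rw [if_pos h, h.1, h.2]
        have heq : A v b - (1 + δ) * A v b = -(δ * A v b) := by ring
        rw [heq, abs_neg, abs_mul, abs_of_pos hδ]
        have hle : δ ≤ ε / (|A v b| + 1) := min_le_right _ _
        have hpos : (0:ℝ) < |A v b| + 1 := by positivity
        calc δ * |A v b| ≤ ε / (|A v b| + 1) * |A v b| :=
              mul_le_mul_of_nonneg_right hle (abs_nonneg _)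
          _ < ε := by
              rw [div_mul_eq_mul_div, div_lt_iff₀ hpos]
              nlinarith [abs_nonneg (A v b)]
      · rw [if_neg h]
        simpa using hε
    obtain ⟨dB, hdB, hqB⟩ := hstab B hpat hclose
    have hBdiag : ∀ i, B i i = A i i := by
      intro i
      rw [hBapp, if_neg]
      rintro ⟨rfl, rfl⟩
      exact hvb rfl
    have hconB : ∀ e ∈ (SimpleGraph.Walk.cons hadj p).darts,
        B e.fst e.snd * dB e.snd + B e.snd e.fst * dB e.fst = 0 := by
      intro e he
      refine edge_constraint' B dB hqB e.adj.1 ?_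
      rw [hBdiag, hBdiag]
      exact hwhite e he
    -- products
    have hPA := walk_prod' A dA (SimpleGraph.Walk.cons hadj p) hconA
    have hPB := walk_prod' B dB (SimpleGraph.Walk.cons hadj p) hconB
    have hPAeq : (((SimpleGraph.Walk.cons hadj p).darts.map (fun e => A e.fst e.snd)).prod)
        = (((SimpleGraph.Walk.cons hadj p).darts.map (fun e => -A e.snd e.fst)).prod) :=
      mul_left_cancel₀ (hdA v).ne' hPA
    have hPBeq : (((SimpleGraph.Walk.cons hadj p).darts.map (fun e => B e.fst e.snd)).prod)
        = (((SimpleGraph.Walk.cons hadj p).darts.map (fun e => -B e.snd e.fst)).prod) :=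
      mul_left_cancel₀ (hdB v).ne' hPB
    -- s(v,b) not in p.edges
    have hnd := hw.edges_nodup
    rw [SimpleGraph.Walk.edges_cons, List.nodup_cons] at hnd
    have hnotmem : s(v, b) ∉ p.edges := hnd.1
    have hne1 : ∀ e ∈ p.darts, ¬(e.fst = v ∧ e.snd = b) := by
      rintro e he ⟨h1, h2⟩
      apply hnotmem
      have : e.edge ∈ p.edges := List.mem_map_of_mem he
      rwa [show e.edge = s(v, b) by rw [SimpleGraph.Dart.edge]; rw [show e.toProd = (v, b) from Prod.ext h1 h2]] at this
    have hne2 : ∀ e ∈ p.darts, ¬(e.snd = v ∧ e.fst = b) := by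
      rintro e he ⟨h1, h2⟩
      apply hnotmem
      have : e.edge ∈ p.edges := List.mem_map_of_mem he
      rwa [show e.edge = s(v, b) by
        rw [SimpleGraph.Dart.edge, show e.toProd = (b, v) from Prod.ext h2 h1, Sym2.eq_swap]] at this
    -- relate B-products to A-products
    have hmapP : (p.darts.map (fun e => B e.fst e.snd)) = (p.darts.map (fun e => A e.fst e.snd)) :=
      List.map_congr_left (fun e he => by rw [hBapp, if_neg (hne1 e he)])
    have hmapQ : ((SimpleGraph.Walk.cons hadj p).darts.map (fun e => -B e.snd e.fst))
        = ((SimpleGraph.Walk.cons hadj p).darts.map (fun e => -A e.snd e.fst)) := by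
      refine List.map_congr_left (fun e he => ?_)
      rw [SimpleGraph.Walk.darts_cons, List.mem_cons] at he
      rcases he with rfl | he
      · rw [hBapp, if_neg]
        rintro ⟨h1, h2⟩
        exact hvb (show b = v from h1).symm
      · rw [hBapp, if_neg (hne2 e he)]
    have hBvb : B v b = (1 + δ) * A v b := by rw [hBapp, if_pos ⟨rfl, rfl⟩]
    have hPBexp : (((SimpleGraph.Walk.cons hadj p).darts.map (fun e => B e.fst e.snd)).prod)
        = (1 + δ) * (((SimpleGraph.Walk.cons hadj p).darts.map (fun e => A e.fst e.snd)).prod) := by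
      simp only [SimpleGraph.Walk.darts_cons, List.map_cons, List.prod_cons, hmapP]
      show B v b * _ = (1 + δ) * (A v b * _)
      rw [hBvb]; ring
    have hPAnz : (((SimpleGraph.Walk.cons hadj p).darts.map (fun e => A e.fst e.snd)).prod) ≠ 0 := by
      apply List.prod_ne_zero
      intro h0
      obtain ⟨e, he, h0⟩ := List.mem_map.mp h0
      exact (hnzA e he).1 h0
    have hfinal : (1 + δ) * (((SimpleGraph.Walk.cons hadj p).darts.map (fun e => A e.fst e.snd)).prod)
        = (((SimpleGraph.Walk.cons hadj p).darts.map (fun e => A e.fst e.snd)).prod) := by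
      rw [← hPBexp, hPBeq, hmapQ, ← hPAeq]
    have : (1 + δ) = 1 := by
      have := mul_right_cancel₀ hPAnz (hfinal.trans (one_mul _).symm)
      exact this
    linarith
end

section
/- Let A be a stably dissipative real n×n matrix and q ∈ ℝⁿ₊. If a vertex i belongs to the R-closure of the graph G_A, then every x ∈ ℝⁿ₊ with A(x − q) = 0 satisfies x_i = q_i; that is, every vertex blackened by the simplified reduction rule (R) is a restriction to the equilibria of X_{A,q}. -/
open Matrix

/-- The R-closure of a black-and-white graph: the smallest set of vertices
containing all black vertices and closed under the reduction rule (R): if all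
neighbours of some vertex `j` belong to `S` except exactly one vertex `k`,
then `k ∈ S`. -/
def RClosure {V : Type*} (G : SimpleGraph V) (black : Set V) : Set V :=
  ⋂₀ {S : Set V | black ⊆ S ∧
    ∀ j k, G.Adj j k → (∀ l, G.Adj j l → l = k ∨ l ∈ S) → k ∈ S}

/-- For a stably dissipative matrix `A` and positive `q`, every vertex `i` in
the R-closure of `G_A` is a restriction to the equilibria of `X_{A,q}`: every
positive `x` with `A(x - q) = 0` satisfies `x i = q i`. -/
theorem stmt8 {n : ℕ} (A : Matrix (Fin n) (Fin n) ℝ)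
    (hA : IsStablyDissipative A) (q : Fin n → ℝ) (hq : ∀ k, 0 < q k)
    (i : Fin n) (hi : i ∈ RClosure (graphOf A) {k | A k k < 0}) :
    ∀ x : Fin n → ℝ, (∀ k, 0 < x k) → A.mulVec (x - q) = 0 → x i = q i := by
  obtain ⟨ε, hε, hstab⟩ := hA
  obtain ⟨d, hd, hQ⟩ := hstab A (fun i j => Iff.rfl)
    (fun i j => by simpa using hε)
  intro x hx hAx
  set y : Fin n → ℝ := fun l => x l - q l with hy
  have hAy : ∀ j, ∑ l, A j l * y l = 0 := by
    intro j
    have h := congrFun hAx j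
    simpa [mulVec, dotProduct, hy] using h
  -- Lemma A : A j k * y j * y k = 0 for all j k
  have key : ∀ j k : Fin n, A j k * y j * y k = 0 := by
    intro j k
    by_cases hjk : A j k = 0
    · simp [hjk]
    have claim : ∀ s : ℝ, |s| ≤ 1/2 → |s| * |A j k| < ε →
        s * (A j k * y j * y k) ≤ 0 := by
      intro s hs1 hs2
      set B : Matrix (Fin n) (Fin n) ℝ :=
        fun i l => A i l + (if i = j ∧ l = k then s * A j k else 0) with hB
      have h1s : (1 : ℝ) + s ≠ 0 := by
        rcases abs_le.mp hs1 with ⟨h1, h2⟩; intro h; linarith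
      have hBjk : B j k = (1 + s) * A j k := by
        simp only [hB, and_self, if_true]
        ring
      have hpat : ∀ i l, B i l = 0 ↔ A i l = 0 := by
        intro i l
        by_cases h : i = j ∧ l = k
        · obtain ⟨rfl, rfl⟩ := h
          rw [hBjk]
          constructor
          · intro h0
            rcases mul_eq_zero.mp h0 with h' | h'
            · exact absurd h' h1s
            · exact h'
          · intro h0; exact absurd h0 hjk
        · simp [hB, h]
      have hnear : ∀ i l, |A i l - B i l| < ε := by
        intro i l
        by_cases h : i = j ∧ l = k
        · obtain ⟨rfl, rfl⟩ := h
          rw [hBjk, show A i l - (1 + s) * A i l = -(s * A i l) by ring, abs_neg,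
            abs_mul]
          exact hs2
        · simp [hB, h, hε]
      obtain ⟨e, he, hQe⟩ := hstab B hpat hnear
      have hsum := hQe (fun l => y l / e l)
      have hterm : ∀ i l : Fin n,
          (y i / e i) * B i l * e l * (y l / e l) = (y i / e i) * (B i l * y l) := by
        intro i l
        have hel : y l / e l * e l = y l := div_mul_cancel₀ _ (he l).ne'
        calc (y i / e i) * B i l * e l * (y l / e l)
            = (y i / e i) * B i l * (y l / e l * e l) := by ring
          _ = (y i / e i) * (B i l * y l) := by rw [hel]; ring
      have hrow : ∀ i : Fin n, ∑ l, B i l * y l =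
          if i = j then s * A j k * y k else 0 := by
        intro i
        have h1 : ∀ l : Fin n, B i l * y l =
            A i l * y l + (if i = j ∧ l = k then s * A j k * y k else 0) := by
          intro l
          by_cases h : i = j ∧ l = k
          · obtain ⟨rfl, rfl⟩ := h
            rw [hBjk]
            simp only [and_self, if_true]
            ring
          · simp [hB, h]
        rw [Finset.sum_congr rfl (fun l _ => h1 l), Finset.sum_add_distrib, hAy i,
          zero_add]
        by_cases hij : i = j
        · subst hij
          simp [Finset.sum_ite_eq']
        · simp [hij]
      have hcomp : ∑ i, ∑ l, (y i / e i) * B i l * e l * (y l / e l)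
          = (y j / e j) * (s * A j k * y k) := by
        rw [Finset.sum_congr rfl (fun i _ => Finset.sum_congr rfl (fun l _ => hterm i l))]
        rw [Finset.sum_congr rfl (fun i _ => by rw [← Finset.mul_sum, hrow i])]
        simp [Finset.sum_ite_eq']
      rw [hcomp] at hsum
      have hej : e j * (y j / e j) = y j := by
        rw [mul_comm]
        exact div_mul_cancel₀ _ (he j).ne'
      have hfin : s * (A j k * y j * y k) = e j * ((y j / e j) * (s * A j k * y k)) := by
        calc s * (A j k * y j * y k)
            = (e j * (y j / e j)) * (s * A j k * y k) := by rw [hej]; ring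
          _ = e j * ((y j / e j) * (s * A j k * y k)) := by ring
      rw [hfin]
      exact mul_nonpos_of_nonneg_of_nonpos (le_of_lt (he j)) hsum
    set δ : ℝ := min (ε / (2 * (|A j k| + 1))) (1/2) with hδ
    have habs : (0:ℝ) ≤ |A j k| := abs_nonneg _
    have hδpos : 0 < δ := by
      apply lt_min
      · positivity
      · norm_num
    have hδhalf : δ ≤ 1/2 := min_le_right _ _
    have hδabs : |δ| = δ := abs_of_pos hδpos
    have hδε : δ * |A j k| < ε := by
      have h1 : δ ≤ ε / (2 * (|A j k| + 1)) := min_le_left _ _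
      have h2 : (0:ℝ) < 2 * (|A j k| + 1) := by linarith
      have h3 : ε / (2 * (|A j k| + 1)) * (2 * (|A j k| + 1)) = ε :=
        div_mul_cancel₀ _ h2.ne'
      nlinarith
    have hpos := claim δ (by rw [hδabs]; exact hδhalf) (by rw [hδabs]; exact hδε)
    have hneg := claim (-δ) (by rw [abs_neg, hδabs]; exact hδhalf)
      (by rw [abs_neg, hδabs]; exact hδε)
    have h0 : δ * (A j k * y j * y k) = 0 := by nlinarith
    rcases mul_eq_zero.mp h0 with h | h
    · exact absurd h hδpos.ne'
    · exact h
  have key' : ∀ j, A j j * y j = 0 := by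
    intro j
    rcases mul_eq_zero.mp (key j j) with h | h
    · exact h
    · rw [h, mul_zero]
  -- Fact T : Aᵀ z = 0 where z l = y l / d l
  set z : Fin n → ℝ := fun l => y l / d l with hzdef
  have hz : ∀ l, d l * z l = y l := by
    intro l
    rw [hzdef]
    rw [mul_comm]
    exact div_mul_cancel₀ _ (hd l).ne'
  set M : Matrix (Fin n) (Fin n) ℝ := fun i l => -(A i l * d l + A l i * d i) with hM
  have hMsym : M.IsHermitian := by
    ext i l
    rw [conjTranspose_apply]
    simp only [hM, star_trivial]
    ring
  have hswap : ∀ v : Fin n → ℝ,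
      ∑ i : Fin n, ∑ l : Fin n, v i * (A l i * d i * v l)
        = ∑ i : Fin n, ∑ l : Fin n, v i * A i l * d l * v l := by
    intro v
    rw [Finset.sum_comm]
    refine Finset.sum_congr rfl fun i _ => Finset.sum_congr rfl fun l _ => ?_
    ring
  have hquadM : ∀ v : Fin n → ℝ,
      star v ⬝ᵥ M *ᵥ v = -(2 * ∑ i, ∑ l, v i * A i l * d l * v l) := by
    intro v
    have h1 : star v ⬝ᵥ M *ᵥ v = ∑ i, ∑ l, v i * (M i l * v l) := by
      simp [dotProduct, mulVec, Finset.mul_sum]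
    rw [h1]
    have h2 : ∀ i l : Fin n, v i * (M i l * v l)
        = -(v i * A i l * d l * v l) + -(v i * (A l i * d i * v l)) := by
      intro i l
      simp only [hM]
      ring
    rw [Finset.sum_congr rfl (fun i _ => Finset.sum_congr rfl (fun l _ => h2 i l))]
    rw [Finset.sum_congr rfl
      (fun i (_ : i ∈ Finset.univ) => Finset.sum_add_distrib), Finset.sum_add_distrib]
    have h3 : ∑ i : Fin n, ∑ l : Fin n, -(v i * (A l i * d i * v l))
        = -∑ i : Fin n, ∑ l : Fin n, v i * (A l i * d i * v l) := by
      simp [Finset.sum_neg_distrib]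
    have h4 : ∑ i : Fin n, ∑ l : Fin n, -(v i * A i l * d l * v l)
        = -∑ i : Fin n, ∑ l : Fin n, v i * A i l * d l * v l := by
      simp [Finset.sum_neg_distrib]
    rw [h3, h4, hswap v]
    ring
  have hMpsd : M.PosSemidef := by
    refine posSemidef_iff_dotProduct_mulVec.mpr ⟨hMsym, fun v => ?_⟩
    rw [hquadM v]
    have := hQ v
    linarith
  have hQz : ∑ i, ∑ l, z i * A i l * d l * z l = 0 := by
    apply Finset.sum_eq_zero
    intro i _
    have h1 : ∀ l : Fin n, z i * A i l * d l * z l = z i * (A i l * y l) := by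
      intro l
      rw [← hz l]
      ring
    rw [Finset.sum_congr rfl (fun l _ => h1 l), ← Finset.mul_sum, hAy i, mul_zero]
  have hMz : M *ᵥ z = 0 := by
    apply (hMpsd.dotProduct_mulVec_zero_iff z).mp
    rw [hquadM z, hQz]
    ring
  have hT : ∀ j, ∑ l, A l j * z l = 0 := by
    intro j
    have h0 : (M *ᵥ z) j = 0 := by rw [hMz]; rfl
    have h1 : (M *ᵥ z) j = ∑ l, M j l * z l := by
      simp [mulVec, dotProduct]
    rw [h1] at h0
    have h2 : ∀ l : Fin n, M j l * z l
        = -(A j l * y l) + -(d j * (A l j * z l)) := by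
      intro l
      rw [← hz l]
      simp only [hM]
      ring
    rw [Finset.sum_congr rfl (fun l _ => h2 l), Finset.sum_add_distrib] at h0
    have h3 : ∑ l : Fin n, -(A j l * y l) = 0 := by
      rw [Finset.sum_neg_distrib, hAy j, neg_zero]
    have h4 : ∑ l : Fin n, -(d j * (A l j * z l))
        = -(d j * ∑ l, A l j * z l) := by
      rw [Finset.sum_neg_distrib, ← Finset.mul_sum]
    rw [h3, h4, zero_add] at h0
    have h5 : d j * ∑ l, A l j * z l = 0 := by linarith
    rcases mul_eq_zero.mp h5 with h | h
    · exact absurd h (hd j).ne'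
    · exact h
  -- the set of zero coordinates is R-closed
  have hSmem : {k : Fin n | y k = 0} ∈ {S : Set (Fin n) | {k | A k k < 0} ⊆ S ∧
      ∀ j k, (graphOf A).Adj j k →
        (∀ l, (graphOf A).Adj j l → l = k ∨ l ∈ S) → k ∈ S} := by
    constructor
    · intro k hk
      have hk' : A k k < 0 := hk
      have := key' k
      rcases mul_eq_zero.mp this with h | h
      · exact absurd h hk'.ne
      · exact h
    · intro j k hadj hall
      simp only [Set.mem_setOf_eq] at hall ⊢
      have e1 : A j k * y k = 0 := by
        have h := hAy j
        rw [Finset.sum_eq_single_of_mem k (Finset.mem_univ k)] at h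
        · exact h
        · intro l _ hlk
          by_cases hlj : l = j
          · subst hlj
            exact key' l
          · by_cases hadjl : (graphOf A).Adj j l
            · rcases hall l hadjl with h' | h'
              · exact absurd h' hlk
              · rw [h', mul_zero]
            · have hA0 : A j l = 0 := by
                by_contra h'
                exact hadjl ⟨fun hh => hlj hh.symm, Or.inl h'⟩
              rw [hA0, zero_mul]
      have e2 : A k j * y k = 0 := by
        have h := hT j
        rw [Finset.sum_eq_single_of_mem k (Finset.mem_univ k)] at h
        · -- h : A k j * z k = 0
          rcases mul_eq_zero.mp h with h' | h'
          · rw [h', zero_mul]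
          · have : y k = 0 := by
              have := (div_eq_zero_iff.mp h').resolve_right (hd k).ne'
              exact this
            rw [this, mul_zero]
        · intro l _ hlk
          by_cases hlj : l = j
          · subst hlj
            show A l l * z l = 0
            rw [show A l l * z l = (A l l * y l) / d l by rw [hzdef]; ring,
              key' l, zero_div]
          · by_cases hadjl : (graphOf A).Adj j l
            · rcases hall l hadjl with h' | h'
              · exact absurd h' hlk
              · show A l j * z l = 0
                rw [show z l = y l / d l from rfl, h', zero_div, mul_zero]
            · have hA0 : A l j = 0 := by
                by_contra h'
                exact hadjl ⟨fun hh => hlj hh.symm, Or.inr h'⟩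
              rw [hA0, zero_mul]
      rcases hadj.2 with h | h
      · exact (mul_eq_zero.mp e1).resolve_left h
      · exact (mul_eq_zero.mp e2).resolve_left h
  have hyi : y i = 0 := hi _ hSmem
  have : x i - q i = 0 := hyi
  linarith
end

section
/- Let A be a stably dissipative real n×n matrix. If A is nonsingular, then the R-closure of the graph G_A equals the full vertex set {1,…,n}. -/
open Matrix

private lemma aux_coeff (a b : ℝ) (h : ∀ t : ℝ, t * a + b ≤ 0) : a = 0 := by
  by_contra ha
  have h1 := h ((1 - b) / a)
  rw [div_mul_cancel₀ _ ha] at h1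
  linarith

private lemma aux_quad_diag {n : ℕ} (B : Matrix (Fin n) (Fin n) ℝ) (d : Fin n → ℝ)
    (hq : ∀ x : Fin n → ℝ, ∑ i, ∑ j, x i * B i j * d j * x j ≤ 0) (k : Fin n) :
    B k k * d k ≤ 0 := by
  have h := hq (fun i => if i = k then 1 else 0)
  have hcol : ∀ i : Fin n,
      (∑ j, (if i = k then (1:ℝ) else 0) * B i j * d j * (if j = k then (1:ℝ) else 0))
        = (if i = k then (1:ℝ) else 0) * B i k * d k := by
    intro i
    rw [Finset.sum_eq_single k]
    · simp
    · intro b _ hb; simp [hb]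
    · simp
  rw [Finset.sum_congr rfl (fun i _ => hcol i), Finset.sum_eq_single k] at h
  · simpa using h
  · intro b _ hb; simp [hb]
  · simp

private lemma aux_keyrel {n : ℕ} (B : Matrix (Fin n) (Fin n) ℝ) (d : Fin n → ℝ)
    (hq : ∀ x : Fin n → ℝ, ∑ i, ∑ j, x i * B i j * d j * x j ≤ 0)
    (k : Fin n) (hkk : B k k = 0) (j : Fin n) : B k j * d j + B j k * d k = 0 := by
  rcases eq_or_ne j k with rfl | hjk
  · rw [hkk]; ring
  refine aux_coeff _ (B j j * d j) ?_
  intro t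
  have h := hq (fun i => if i = k then t else if i = j then 1 else 0)
  set x : Fin n → ℝ := fun i => if i = k then t else if i = j then 1 else 0 with hx
  have hx0 : ∀ i : Fin n, i ≠ k → i ≠ j → x i = 0 := by
    intro i h1 h2; simp [hx, h1, h2]
  have hxk : x k = t := by simp [hx]
  have hxj : x j = 1 := by simp [hx, hjk]
  have hkj : k ≠ j := hjk.symm
  have hcol : ∀ i : Fin n, (∑ m, x i * B i m * d m * x m)
      = x i * B i k * d k * t + x i * B i j * d j * 1 := by
    intro i
    have h2 : (∑ m, x i * B i m * d m * x m) = ∑ m ∈ ({k, j} : Finset (Fin n)),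
        x i * B i m * d m * x m := by
      refine (Finset.sum_subset (Finset.subset_univ _) ?_).symm
      intro m _ hm
      simp only [Finset.mem_insert, Finset.mem_singleton, not_or] at hm
      rw [hx0 m hm.1 hm.2]; ring
    rw [h2, Finset.sum_pair hkj, hxk, hxj]
  have houter : (∑ i, ∑ m, x i * B i m * d m * x m)
      = ∑ i ∈ ({k, j} : Finset (Fin n)), (x i * B i k * d k * t + x i * B i j * d j * 1) := by
    rw [Finset.sum_congr rfl (fun i _ => hcol i)]
    refine (Finset.sum_subset (Finset.subset_univ _) ?_).symm
    intro m _ hm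
    simp only [Finset.mem_insert, Finset.mem_singleton, not_or] at hm
    rw [hx0 m hm.1 hm.2]; ring
  rw [houter, Finset.sum_pair hkj, hxk, hxj, hkk] at h
  calc t * (B k j * d j + B j k * d k) + B j j * d j
      = t * 0 * d k * t + t * B k j * d j * 1 + (1 * B j k * d k * t + 1 * B j j * d j * 1) := by
        ring
    _ ≤ 0 := h

set_option maxHeartbeats 1600000 in
/-- If `A` is stably dissipative and nonsingular, then the R-closure of `G_A`
is the full vertex set. -/
theorem stmt10 {n : ℕ} (A : Matrix (Fin n) (Fin n) ℝ)
    (hA : IsStablyDissipative A) (hns : A.det ≠ 0) :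
    RClosure (graphOf A) {k | A k k < 0} = Set.univ := by
  classical
  rw [RClosure, Set.sInter_eq_univ]
  rintro S ⟨hb, hr⟩
  rw [Set.eq_univ_iff_forall]
  by_contra hSne
  push_neg at hSne
  obtain ⟨k₀, hk₀⟩ := hSne
  obtain ⟨ε, hε, hstab⟩ := hA
  obtain ⟨d, hd, hq⟩ := hstab A (fun i j => Iff.rfl) (fun i j => by simpa using hε)
  -- white diagonal
  have hdiag : ∀ k, k ∉ S → A k k = 0 := by
    intro k hk
    have h1 : A k k * d k ≤ 0 := aux_quad_diag A d hq k
    have h3 : ¬ A k k < 0 := fun hlt => hk (hb hlt)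
    have h2 : A k k ≤ 0 := by nlinarith [hd k]
    exact le_antisymm h2 (not_lt.mp h3)
  -- skew relations at white vertices
  have hskewA : ∀ k, k ∉ S → ∀ j, A k j * d j + A j k * d k = 0 :=
    fun k hk j => aux_keyrel A d hq k (hdiag k hk) j
  have hsym : ∀ m, m ∉ S → ∀ i, (A i m ≠ 0 ↔ A m i ≠ 0) := by
    intro m hm i
    have h := hskewA m hm i
    constructor
    · intro h1
      by_contra h2
      rw [h2, zero_mul, zero_add] at h
      rcases mul_eq_zero.mp h with h4 | h4
      · exact h1 h4
      · exact (hd m).ne' h4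
    · intro h1
      by_contra h2
      rw [h2, zero_mul, add_zero] at h
      rcases mul_eq_zero.mp h with h4 | h4
      · exact h1 h4
      · exact (hd i).ne' h4
  have hsymP : ∀ a b : Fin n, (a ∉ S ∨ b ∉ S) → A a b ≠ 0 → A b a ≠ 0 := by
    intro a b hor hab
    rcases hor with h | h
    · exact (hsym a h b).mpr hab
    · exact (hsym b h a).mp hab
  -- rule (R) consequence
  have hP3 : ∀ k, k ∉ S → ∀ j, (graphOf A).Adj j k →
      ∃ l, l ∉ S ∧ l ≠ k ∧ l ≠ j ∧ A j l ≠ 0 ∧ A l j ≠ 0 := by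
    intro k hk j hadj
    by_contra hcon
    push_neg at hcon
    apply hk
    apply hr j k hadj
    intro l hl
    by_cases hlk : l = k
    · exact Or.inl hlk
    right
    by_contra hlS
    have hlj : l ≠ j := fun h => (graphOf A).loopless.irrefl j (h ▸ hl)
    have hjl : A j l ≠ 0 := by
      rcases hl.2 with h | h
      · exact h
      · exact (hsym l hlS j).mpr h
    have hlj' : A l j ≠ 0 := (hsym l hlS j).mp hjl
    exact hlj' (hcon l hlS hlk hlj hjl)
  -- finsets
  set T : Finset (Fin n) := Finset.univ.filter (fun k => k ∉ S) with hT
  set N : Finset (Fin n) :=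
    Finset.univ.filter (fun j => j ∈ S ∧ ∃ k, k ∉ S ∧ j ≠ k ∧ A j k ≠ 0) with hN
  set T₂ : Finset (Fin n) :=
    Finset.univ.filter (fun j => j ∉ S ∧ ∃ k, k ∉ S ∧ j ≠ k ∧ A j k ≠ 0) with hT₂
  set C : Finset (Fin n) := T ∪ N with hC
  set E : Finset (Fin n × Fin n) := Finset.univ.filter
      (fun p => p.1 < p.2 ∧ (p.1 ∉ S ∨ p.2 ∉ S) ∧ A p.1 p.2 ≠ 0) with hE
  set P : Finset (Fin n × Fin n) := Finset.univ.filter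
      (fun p => p.2 ∉ S ∧ p.1 ≠ p.2 ∧ A p.1 p.2 ≠ 0) with hP
  set Dir : Finset (Fin n × Fin n) := Finset.univ.filter
      (fun p => p.1 ≠ p.2 ∧ (p.1 ∉ S ∨ p.2 ∉ S) ∧ A p.1 p.2 ≠ 0) with hDir
  set P₁ : Finset (Fin n × Fin n) := P.filter (fun p => p.1 ∈ S) with hP₁
  set P₂ : Finset (Fin n × Fin n) := P.filter (fun p => ¬ p.1 ∈ S) with hP₂
  -- cardinality identities
  have hcard_P12 : P₁.card + P₂.card = P.card :=
    Finset.card_filter_add_card_filter_not (s := P) (fun p => p.1 ∈ S)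
  have hDir_filter : Dir.filter (fun p => ¬ p.2 ∈ S) = P := by
    ext p
    simp only [hDir, hP, Finset.mem_filter, Finset.mem_univ, true_and]
    constructor
    · rintro ⟨⟨h1, _, h3⟩, h4⟩; exact ⟨h4, h1, h3⟩
    · rintro ⟨h1, h2, h3⟩; exact ⟨⟨h2, Or.inr h1, h3⟩, h1⟩
  have hQP1 : (Dir.filter (fun p => p.2 ∈ S)).card = P₁.card := by
    refine Finset.card_nbij' Prod.swap Prod.swap ?_ ?_ ?_ ?_
    · intro p hp
      simp only [hDir, Finset.mem_coe, Finset.mem_filter, Finset.mem_univ, true_and] at hp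
      obtain ⟨⟨h1, h2, h3⟩, h4⟩ := hp
      have h5 : p.1 ∉ S := by tauto
      simp only [hP₁, hP, Finset.mem_coe, Finset.mem_filter, Finset.mem_univ, true_and,
        Prod.fst_swap, Prod.snd_swap]
      exact ⟨⟨h5, h1.symm, hsymP _ _ h2 h3⟩, h4⟩
    · intro p hp
      simp only [hP₁, hP, Finset.mem_coe, Finset.mem_filter, Finset.mem_univ, true_and] at hp
      obtain ⟨⟨h1, h2, h3⟩, h4⟩ := hp
      simp only [hDir, Finset.mem_coe, Finset.mem_filter, Finset.mem_univ, true_and,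
        Prod.fst_swap, Prod.snd_swap]
      exact ⟨⟨h2.symm, Or.inl h1, hsymP _ _ (Or.inr h1) h3⟩, h4⟩
    · intro p _; simp
    · intro p _; simp
  have hDir_card : P₁.card + P.card = Dir.card := by
    have h := Finset.card_filter_add_card_filter_not
      (s := Dir) (fun p => p.2 ∈ S)
    rw [hDir_filter, hQP1] at h
    exact h
  have hE_filter : Dir.filter (fun p => p.1 < p.2) = E := by
    ext p
    simp only [hDir, hE, Finset.mem_filter, Finset.mem_univ, true_and]
    constructor
    · rintro ⟨⟨_, h2, h3⟩, h4⟩; exact ⟨h4, h2, h3⟩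
    · rintro ⟨h1, h2, h3⟩; exact ⟨⟨h1.ne, h2, h3⟩, h1⟩
  have hGE : (Dir.filter (fun p => ¬ p.1 < p.2)).card = E.card := by
    refine Finset.card_nbij' Prod.swap Prod.swap ?_ ?_ ?_ ?_
    · intro p hp
      simp only [hDir, Finset.mem_coe, Finset.mem_filter, Finset.mem_univ, true_and] at hp
      obtain ⟨⟨h1, h2, h3⟩, h4⟩ := hp
      simp only [hE, Finset.mem_coe, Finset.mem_filter, Finset.mem_univ, true_and,
        Prod.fst_swap, Prod.snd_swap]
      exact ⟨lt_of_le_of_ne (not_lt.mp h4) h1.symm, h2.symm, hsymP _ _ h2 h3⟩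
    · intro p hp
      simp only [hE, Finset.mem_coe, Finset.mem_filter, Finset.mem_univ, true_and] at hp
      obtain ⟨h1, h2, h3⟩ := hp
      simp only [hDir, Finset.mem_coe, Finset.mem_filter, Finset.mem_univ, true_and,
        Prod.fst_swap, Prod.snd_swap]
      exact ⟨⟨h1.ne.symm, h2.symm, hsymP _ _ h2 h3⟩, not_lt.mpr h1.le⟩
    · intro p _; simp
    · intro p _; simp
  have hDir2E : Dir.card = 2 * E.card := by
    have h := Finset.card_filter_add_card_filter_not
      (s := Dir) (fun p => p.1 < p.2)
    rw [hE_filter, hGE] at h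
    omega
  -- fiberwise bounds
  have hP1N : ∀ p ∈ P₁, p.1 ∈ N := by
    intro p hp
    simp only [hP₁, hP, Finset.mem_filter, Finset.mem_univ, true_and] at hp
    obtain ⟨⟨h1, h2, h3⟩, h4⟩ := hp
    simp only [hN, Finset.mem_filter, Finset.mem_univ, true_and]
    exact ⟨h4, p.2, h1, h2, h3⟩
  have hP2T2 : ∀ p ∈ P₂, p.1 ∈ T₂ := by
    intro p hp
    simp only [hP₂, hP, Finset.mem_filter, Finset.mem_univ, true_and] at hp
    obtain ⟨⟨h1, h2, h3⟩, h4⟩ := hp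
    simp only [hT₂, Finset.mem_filter, Finset.mem_univ, true_and]
    exact ⟨h4, p.2, h1, h2, h3⟩
  have hfiber : ∀ (j : Fin n), j ∉ S ∨ j ∈ S → (∃ k, k ∉ S ∧ j ≠ k ∧ A j k ≠ 0) →
      ∀ (W : Finset (Fin n × Fin n)), (∀ q : Fin n × Fin n, q.2 ∉ S → q.1 ≠ q.2 → A q.1 q.2 ≠ 0 →
        q.1 = j → q ∈ W) → 2 ≤ (W.filter (fun p => p.1 = j)).card := by
    intro j _ hex W hW
    obtain ⟨k, hk, hjk, hAjk⟩ := hex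
    have hadj : (graphOf A).Adj j k := ⟨hjk, Or.inl hAjk⟩
    obtain ⟨l, hlS, hlk, hlj, hAjl, _⟩ := hP3 k hk j hadj
    have hsub : ({(j, k), (j, l)} : Finset (Fin n × Fin n)) ⊆
        W.filter (fun p => p.1 = j) := by
      intro p hp
      simp only [Finset.mem_insert, Finset.mem_singleton] at hp
      rcases hp with rfl | rfl
      · exact Finset.mem_filter.mpr ⟨hW (j, k) hk hjk hAjk rfl, rfl⟩
      · exact Finset.mem_filter.mpr ⟨hW (j, l) hlS (Ne.symm hlj) hAjl rfl, rfl⟩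
    calc 2 = ({(j, k), (j, l)} : Finset (Fin n × Fin n)).card := by
          rw [Finset.card_pair (by simp [Ne.symm hlk])]
      _ ≤ _ := Finset.card_le_card hsub
  have hP1card : 2 * N.card ≤ P₁.card := by
    rw [Finset.card_eq_sum_card_fiberwise hP1N]
    calc 2 * N.card = ∑ _j ∈ N, 2 := by rw [Finset.sum_const, smul_eq_mul, mul_comm]
      _ ≤ _ := by
          refine Finset.sum_le_sum ?_
          intro j hj
          simp only [hN, Finset.mem_filter, Finset.mem_univ, true_and] at hj
          refine hfiber j (Or.inr hj.1) hj.2 P₁ ?_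
          intro q h1 h2 h3 h4
          simp only [hP₁, hP, Finset.mem_filter, Finset.mem_univ, true_and]
          exact ⟨⟨h1, h2, h3⟩, h4 ▸ hj.1⟩
  have hP2card : 2 * T₂.card ≤ P₂.card := by
    rw [Finset.card_eq_sum_card_fiberwise hP2T2]
    calc 2 * T₂.card = ∑ _j ∈ T₂, 2 := by rw [Finset.sum_const, smul_eq_mul, mul_comm]
      _ ≤ _ := by
          refine Finset.sum_le_sum ?_
          intro j hj
          simp only [hT₂, Finset.mem_filter, Finset.mem_univ, true_and] at hj
          refine hfiber j (Or.inl hj.1) hj.2 P₂ ?_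
          intro q h1 h2 h3 h4
          simp only [hP₂, hP, Finset.mem_filter, Finset.mem_univ, true_and]
          exact ⟨⟨h1, h2, h3⟩, h4 ▸ hj.1⟩
  -- endpoints of E lie in C
  have hCE : ∀ p ∈ E, p.1 ∈ C ∧ p.2 ∈ C := by
    intro p hp
    simp only [hE, Finset.mem_filter, Finset.mem_univ, true_and] at hp
    obtain ⟨h1, h2, h3⟩ := hp
    constructor
    · by_cases hs : p.1 ∈ S
      · have h2' : p.2 ∉ S := by tauto
        refine Finset.mem_union_right _ ?_
        simp only [hN, Finset.mem_filter, Finset.mem_univ, true_and]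
        exact ⟨hs, p.2, h2', h1.ne, h3⟩
      · refine Finset.mem_union_left _ ?_
        simp only [hT, Finset.mem_filter, Finset.mem_univ, true_and]
        exact hs
    · by_cases hs : p.2 ∈ S
      · have h2' : p.1 ∉ S := by tauto
        refine Finset.mem_union_right _ ?_
        simp only [hN, Finset.mem_filter, Finset.mem_univ, true_and]
        exact ⟨hs, p.1, h2', h1.ne.symm, hsymP _ _ h2 h3⟩
      · refine Finset.mem_union_left _ ?_
        simp only [hT, Finset.mem_filter, Finset.mem_univ, true_and]
        exact hs
  have hEA12 : ∀ p ∈ E, A p.1 p.2 ≠ 0 := by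
    intro p hp
    simp only [hE, Finset.mem_filter, Finset.mem_univ, true_and] at hp
    exact hp.2.2
  have hEor : ∀ p ∈ E, p.1 ∉ S ∨ p.2 ∉ S := by
    intro p hp
    simp only [hE, Finset.mem_filter, Finset.mem_univ, true_and] at hp
    exact hp.2.1
  have hEA21 : ∀ p ∈ E, A p.2 p.1 ≠ 0 := fun p hp => hsymP _ _ (hEor p hp) (hEA12 p hp)
  have hk₀T : k₀ ∈ T := by
    simp only [hT, Finset.mem_filter, Finset.mem_univ, true_and]; exact hk₀
  have hk₀C : k₀ ∈ C := Finset.mem_union_left _ hk₀T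
  -- the linear map φ
  let φ : ({x // x ∈ C} → ℝ) →ₗ[ℝ] ({p // p ∈ E} → ℝ) :=
    { toFun := fun u e => u ⟨e.1.1, (hCE e.1 e.2).1⟩ - u ⟨e.1.2, (hCE e.1 e.2).2⟩
      map_add' := by intro u v; funext e; simp only [Pi.add_apply]; ring
      map_smul' := by
        intro c u; funext e
        simp only [Pi.smul_apply, smul_eq_mul, RingHom.id_apply]; ring }
  have hφ : ∀ (u : {x // x ∈ C} → ℝ) (e : {p // p ∈ E}),
      φ u e = u ⟨e.1.1, (hCE e.1 e.2).1⟩ - u ⟨e.1.2, (hCE e.1 e.2).2⟩ := fun _ _ => rfl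
  -- skew relations give log formula
  have hlog : ∀ (B : Matrix (Fin n) (Fin n) ℝ) (d' : Fin n → ℝ), (∀ i, 0 < d' i) →
      (∀ k, k ∉ S → ∀ j, B k j * d' j + B j k * d' k = 0) →
      ∀ p ∈ E, B p.2 p.1 ≠ 0 →
      Real.log (d' p.1) - Real.log (d' p.2) = Real.log (-B p.1 p.2 / B p.2 p.1) := by
    intro B d' hd' hsk p hp hB21
    have hor := hEor p hp
    have heq : B p.2 p.1 * d' p.1 + B p.1 p.2 * d' p.2 = 0 := by
      rcases hor with h | h
      · have := hsk p.1 h p.2; linarith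
      · have := hsk p.2 h p.1; linarith
    have hratio : d' p.1 / d' p.2 = -B p.1 p.2 / B p.2 p.1 := by
      rw [div_eq_div_iff (hd' p.2).ne' hB21]
      linarith
    rw [← Real.log_div (hd' p.1).ne' (hd' p.2).ne', hratio]
  -- w₀ is in the range of φ
  have hw₀mem : (fun e : {p // p ∈ E} =>
      Real.log (-A e.1.1 e.1.2 / A e.1.2 e.1.1)) ∈ LinearMap.range φ := by
    refine ⟨fun c => Real.log (d c.1), ?_⟩
    funext e
    rw [hφ]
    exact hlog A d hd hskewA e.1 e.2 (hEA21 e.1 e.2)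
  -- surjectivity of φ
  have hrange : ∀ w : {p // p ∈ E} → ℝ, w ∈ LinearMap.range φ := by
    intro w
    set K : ℝ := 1 + ∑ e : {p // p ∈ E}, (|w e| + |A e.1.1 e.1.2 * w e|) with hK
    have hsumnn : (0:ℝ) ≤ ∑ e : {p // p ∈ E}, (|w e| + |A e.1.1 e.1.2 * w e|) :=
      Finset.sum_nonneg (fun e _ => by positivity)
    have hK1 : 1 ≤ K := by rw [hK]; linarith
    have hK0 : 0 < K := by linarith
    have hKb : ∀ e : {p // p ∈ E}, |w e| ≤ K ∧ |A e.1.1 e.1.2 * w e| ≤ K := by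
      intro e
      have h1 : |w e| + |A e.1.1 e.1.2 * w e| ≤
          ∑ e : {p // p ∈ E}, (|w e| + |A e.1.1 e.1.2 * w e|) :=
        Finset.single_le_sum (f := fun e : {p // p ∈ E} =>
          |w e| + |A e.1.1 e.1.2 * w e|) (fun e _ => by positivity) (Finset.mem_univ e)
      constructor
      · have := abs_nonneg (A e.1.1 e.1.2 * w e); rw [hK]; linarith
      · have := abs_nonneg (w e); rw [hK]; linarith
    set t : ℝ := min (1 / K) (ε / (2 * K + 1)) with ht
    have ht0 : 0 < t := lt_min (by positivity) (by positivity)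
    have htK : t ≤ 1 / K := min_le_left _ _
    have htε : t ≤ ε / (2 * K + 1) := min_le_right _ _
    set B : Matrix (Fin n) (Fin n) ℝ := fun i j =>
      if h : (i, j) ∈ E then A i j * Real.exp (t * w ⟨(i, j), h⟩) else A i j with hB
    have hBpat : ∀ i j, B i j = 0 ↔ A i j = 0 := by
      intro i j
      by_cases h : (i, j) ∈ E
      · simp [hB, h, Real.exp_ne_zero]
      · simp [hB, h]
    have htwe : ∀ e : {p // p ∈ E}, |t * w e| ≤ 1 := by
      intro e
      rw [abs_mul, abs_of_pos ht0]
      calc t * |w e| ≤ (1 / K) * K :=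
            mul_le_mul htK (hKb e).1 (abs_nonneg _) (by positivity)
        _ = 1 := by field_simp
    have hBclose : ∀ i j, |A i j - B i j| < ε := by
      intro i j
      by_cases h : (i, j) ∈ E
      · have key : |A i j - B i j| = |A i j| * |Real.exp (t * w ⟨(i, j), h⟩) - 1| := by
          rw [hB]
          simp only [dif_pos h]
          rw [abs_sub_comm, ← abs_mul]
          congr 1
          ring
        rw [key]
        have h1 : |Real.exp (t * w ⟨(i, j), h⟩) - 1| ≤ 2 * |t * w ⟨(i, j), h⟩| :=
          Real.abs_exp_sub_one_le (htwe ⟨(i, j), h⟩)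
        have h2 : |A i j| * |Real.exp (t * w ⟨(i, j), h⟩) - 1| ≤
            2 * t * |A i j * w ⟨(i, j), h⟩| := by
          have := abs_nonneg (A i j)
          calc |A i j| * |Real.exp (t * w ⟨(i, j), h⟩) - 1|
              ≤ |A i j| * (2 * |t * w ⟨(i, j), h⟩|) := by
                exact mul_le_mul_of_nonneg_left h1 this
            _ = 2 * t * |A i j * w ⟨(i, j), h⟩| := by
                rw [abs_mul, abs_mul, abs_of_pos ht0]; ring
        have h3 : |A i j * w ⟨(i, j), h⟩| ≤ K := (hKb ⟨(i, j), h⟩).2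
        have h4 : 2 * t * |A i j * w ⟨(i, j), h⟩| ≤ 2 * t * K := by nlinarith
        have h5 : 2 * t * K < ε := by
          have hD : (0:ℝ) < 2 * K + 1 := by linarith
          have h6 : t * (2 * K + 1) ≤ ε := (le_div_iff₀ hD).mp htε
          have h7 : t * (2 * K + 1) = 2 * t * K + t := by ring
          linarith
        linarith
      · have : B i j = A i j := by simp [hB, h]
        rw [this]
        simpa using hε
    obtain ⟨d', hd', hq'⟩ := hstab B hBpat hBclose
    have hBdiag : ∀ k, k ∉ S → B k k = 0 := by
      intro k hk
      have hkE : (k, k) ∉ E := by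
        simp only [hE, Finset.mem_filter, Finset.mem_univ, true_and]
        intro h
        exact absurd h.1 (lt_irrefl k)
      rw [hB]
      simp only [dif_neg hkE]
      exact hdiag k hk
    have hskB : ∀ k, k ∉ S → ∀ j, B k j * d' j + B j k * d' k = 0 :=
      fun k hk j => aux_keyrel B d' hq' k (hBdiag k hk) j
    refine ⟨fun c => (Real.log (d' c.1) - Real.log (d c.1)) / t, ?_⟩
    funext e
    rw [hφ]
    have hmE : (e.1.1, e.1.2) ∈ E := by
      have : e.1 = (e.1.1, e.1.2) := rfl
      rw [← this]; exact e.2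
    have hmE' : (e.1.2, e.1.1) ∉ E := by
      simp only [hE, Finset.mem_filter, Finset.mem_univ, true_and]
      intro h
      have h1 : e.1.1 < e.1.2 := by
        have := e.2
        simp only [hE, Finset.mem_filter, Finset.mem_univ, true_and] at this
        exact this.1
      exact absurd h.1 (lt_asymm h1)
    have hB12 : B e.1.1 e.1.2 = A e.1.1 e.1.2 * Real.exp (t * w e) := by
      rw [hB]
      simp only [dif_pos hmE]
    have hB21 : B e.1.2 e.1.1 = A e.1.2 e.1.1 := by
      rw [hB]; simp only [dif_neg hmE']
    have hB21ne : B e.1.2 e.1.1 ≠ 0 := by rw [hB21]; exact hEA21 e.1 e.2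
    have h1 := hlog B d' hd' hskB e.1 e.2 hB21ne
    have h2 := hlog A d hd hskewA e.1 e.2 (hEA21 e.1 e.2)
    have h3 : -B e.1.1 e.1.2 / B e.1.2 e.1.1 =
        (-A e.1.1 e.1.2 / A e.1.2 e.1.1) * Real.exp (t * w e) := by
      rw [hB12, hB21]
      ring
    have hxne : -A e.1.1 e.1.2 / A e.1.2 e.1.1 ≠ 0 :=
      div_ne_zero (neg_ne_zero.mpr (hEA12 e.1 e.2)) (hEA21 e.1 e.2)
    have h4 : Real.log (d' e.1.1) - Real.log (d' e.1.2) =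
        Real.log (-A e.1.1 e.1.2 / A e.1.2 e.1.1) + t * w e := by
      rw [h1, h3, Real.log_mul hxne (Real.exp_ne_zero _), Real.log_exp]
    have h5 : (Real.log (d' e.1.1) - Real.log (d e.1.1)) / t -
        (Real.log (d' e.1.2) - Real.log (d e.1.2)) / t = (t * w e) / t := by
      rw [div_sub_div_same]
      congr 1
      linarith
    rw [h5]
    exact mul_div_cancel_left₀ _ ht0.ne'
  -- rank-nullity
  have hEcard : E.card + 1 ≤ C.card := by
    have hsurj : LinearMap.range φ = ⊤ := by
      rw [LinearMap.range_eq_top]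
      intro w
      exact hrange w
    have hfr := LinearMap.finrank_range_add_finrank_ker φ
    rw [hsurj, finrank_top, Module.finrank_fintype_fun_eq_card,
      Module.finrank_fintype_fun_eq_card, Fintype.card_coe, Fintype.card_coe] at hfr
    have hker : Module.finrank ℝ (LinearMap.ker φ) ≠ 0 := by
      have h1 : ((fun _ => (1:ℝ)) : {x // x ∈ C} → ℝ) ∈ LinearMap.ker φ := by
        rw [LinearMap.mem_ker]
        funext e
        rw [hφ, Pi.zero_apply]
        ring
      intro h0
      rw [Submodule.finrank_eq_zero] at h0
      rw [h0, Submodule.mem_bot] at h1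
      have h2 := congrFun h1 ⟨k₀, hk₀C⟩
      simpa using h2
    omega
  have hCcard : C.card ≤ T.card + N.card := Finset.card_union_le _ _
  have hRT : (N ∪ T₂).card + 1 ≤ T.card := by
    have h2 : (N ∪ T₂).card ≤ N.card + T₂.card := Finset.card_union_le _ _
    omega
  set R : Finset (Fin n) := N ∪ T₂ with hR
  -- the linear map θ
  let θ : ({x // x ∈ T} → ℝ) →ₗ[ℝ] ({x // x ∈ R} → ℝ) :=
    { toFun := fun c r => ∑ k : {x // x ∈ T}, A r.1 k.1 * c k
      map_add' := by
        intro a b; funext r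
        simp only [Pi.add_apply]
        rw [← Finset.sum_add_distrib]
        exact Finset.sum_congr rfl (fun k _ => by ring)
      map_smul' := by
        intro m a; funext r
        simp only [Pi.smul_apply, smul_eq_mul, RingHom.id_apply]
        rw [Finset.mul_sum]
        exact Finset.sum_congr rfl (fun k _ => by ring) }
  have hθ : ∀ (c : {x // x ∈ T} → ℝ) (r : {x // x ∈ R}),
      θ c r = ∑ k : {x // x ∈ T}, A r.1 k.1 * c k := fun _ _ => rfl
  have hθnotinj : ¬ Function.Injective θ := by
    intro hinj
    have h1 := LinearMap.finrank_le_finrank_of_injective hinj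
    rw [Module.finrank_fintype_fun_eq_card, Module.finrank_fintype_fun_eq_card,
      Fintype.card_coe, Fintype.card_coe] at h1
    omega
  obtain ⟨a, b, hab, hne⟩ := Function.not_injective_iff.mp hθnotinj
  have hc0 : a - b ≠ 0 := sub_ne_zero.mpr hne
  have hθc : θ (a - b) = 0 := by rw [map_sub, hab, sub_self]
  set c : {x // x ∈ T} → ℝ := a - b with hcdef
  set v : Fin n → ℝ := fun i => if h : i ∈ T then c ⟨i, h⟩ else 0 with hv
  have hv0 : v ≠ 0 := by
    obtain ⟨k, hk⟩ := Function.ne_iff.mp hc0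
    intro h0
    apply hk
    have h1 := congrFun h0 k.1
    rw [hv] at h1
    simp only [dif_pos k.2, Pi.zero_apply] at h1
    simpa using h1
  have hmv : A.mulVec v = 0 := by
    funext i
    rw [Pi.zero_apply]
    show ∑ j, A i j * v j = 0
    have hsum : ∑ j, A i j * v j = ∑ k : {x // x ∈ T}, A i k.1 * c k := by
      have h1 : ∑ j, A i j * v j = ∑ j ∈ T, A i j * v j := by
        refine (Finset.sum_subset (Finset.subset_univ T) ?_).symm
        intro j _ hj
        rw [hv]
        simp only [dif_neg hj]
        ring
      rw [h1, ← Finset.sum_coe_sort T (fun j => A i j * v j)]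
      refine Finset.sum_congr rfl ?_
      intro k _
      rw [hv]
      simp only [dif_pos k.2]
    by_cases hiR : i ∈ R
    · rw [hsum]
      have := congrFun hθc ⟨i, hiR⟩
      rw [hθ] at this
      simpa using this
    · rw [hsum]
      apply Finset.sum_eq_zero
      intro k _
      have hkT : k.1 ∉ S := by
        have := k.2
        simp only [hT, Finset.mem_filter, Finset.mem_univ, true_and] at this
        exact this
      by_cases hAik : A i k.1 = 0
      · rw [hAik]; ring
      exfalso
      apply hiR
      by_cases hik : i = k.1
      · rw [hik] at hAik; exact absurd (hdiag k.1 hkT) hAik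
      by_cases hiS : i ∈ S
      · refine Finset.mem_union_left _ ?_
        simp only [hN, Finset.mem_filter, Finset.mem_univ, true_and]
        exact ⟨hiS, k.1, hkT, hik, hAik⟩
      · refine Finset.mem_union_right _ ?_
        simp only [hT₂, Finset.mem_filter, Finset.mem_univ, true_and]
        exact ⟨hiS, k.1, hkT, hik, hAik⟩
  exact hns (Matrix.exists_mulVec_eq_zero_iff.mp ⟨v, hv0, hmv⟩)
end

section
/- Let G be a stably dissipative black-and-white graph with no ∘-endpoints, i.e. every white vertex has at least two neighbours. Then the R-closure of G equals the full vertex set. -/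
/-- A black-and-white graph is stably dissipative iff every cycle contains at
least one edge joining two black vertices. -/
def IsStablyDissipativeGraph {V : Type*} (G : SimpleGraph V)
    (black : V → Prop) : Prop :=
  ∀ (v : V) (w : G.Walk v v), w.IsCycle →
    ∃ i j : V, s(i, j) ∈ w.edges ∧ black i ∧ black j

/-- If a finite, stably dissipative black-and-white graph has no ∘-endpoints
(i.e. every white vertex has at least two neighbours), then its R-closure is
the full vertex set. -/
theorem stmt11 {V : Type*} [Fintype V] (G : SimpleGraph V) (black : Set V)
    (hsd : IsStablyDissipativeGraph G (· ∈ black))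
    (hend : ∀ v, v ∉ black → ∃ u w : V, u ≠ w ∧ G.Adj v u ∧ G.Adj v w) :
    RClosure G black = Set.univ := by
  classical
  ext v
  simp only [Set.mem_univ, iff_true, RClosure, Set.mem_sInter, Set.mem_setOf_eq]
  rintro S ⟨hblack, hrule⟩
  by_contra hv
  -- the auxiliary subgraph of edges having at least one endpoint outside `S`
  set H : SimpleGraph V :=
    { Adj := fun a b => G.Adj a b ∧ (a ∉ S ∨ b ∉ S)
      symm := ⟨fun a b hab => ⟨hab.1.symm, hab.2.symm⟩⟩
      loopless := ⟨fun a ha => G.loopless.irrefl a ha.1⟩ } with hH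
  have hle : H ≤ G := fun a b hab => hab.1
  -- every vertex incident to an `H`-edge has a second `H`-neighbour
  have key : ∀ a b, H.Adj a b → ∃ c, H.Adj a c ∧ c ≠ b := by
    rintro a b ⟨hab, hor⟩
    rcases hor with ha | hb
    · have hwa : a ∉ black := fun h => ha (hblack h)
      obtain ⟨x, y, hxy, hax, hay⟩ := hend a hwa
      by_cases hxb : x = b
      · exact ⟨y, ⟨hay, Or.inl ha⟩, by rw [← hxb]; exact hxy.symm⟩
      · exact ⟨x, ⟨hax, Or.inl ha⟩, hxb⟩
    · have : ¬ ∀ l, G.Adj a l → l = b ∨ l ∈ S := fun h => hb (hrule a b hab h)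
      push_neg at this
      obtain ⟨l, hal, hlb, hlS⟩ := this
      exact ⟨l, ⟨hal, Or.inr hlS⟩, hlb⟩
  -- `H` has at least one edge (incident to `v`)
  have hwv : v ∉ black := fun h => hv (hblack h)
  obtain ⟨x₀, y₀, _, hvx₀, _⟩ := hend v hwv
  have hedge : H.Adj v x₀ := ⟨hvx₀, Or.inl hv⟩
  -- take a maximal path in `H`
  set P : ℕ → Prop := fun m => ∃ (a b : V) (p : H.Walk a b), p.IsPath ∧ p.length = m with hP
  set N := Nat.findGreatest P (Fintype.card V) with hN
  have hP1 : P 1 := ⟨v, x₀, SimpleGraph.Walk.cons hedge SimpleGraph.Walk.nil, by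
    simp [SimpleGraph.Walk.isPath_def, hedge.ne], rfl⟩
  have hcard : (1 : ℕ) ≤ Fintype.card V := Fintype.card_pos_iff.mpr ⟨v⟩
  have hPN : P N := Nat.findGreatest_spec hcard hP1
  have hN1 : 1 ≤ N := Nat.le_findGreatest hcard hP1
  obtain ⟨a, b, p, hp, hlen⟩ := hPN
  cases p with
  | nil => simp at hlen; omega
  | @cons _ v₂ _ h₂ p₂ =>
    rw [SimpleGraph.Walk.cons_isPath_iff] at hp
    obtain ⟨hp₂, hup₂⟩ := hp
    obtain ⟨w, hw, hwv₂⟩ := key a v₂ h₂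
    set p' : H.Walk a b := SimpleGraph.Walk.cons h₂ p₂ with hp'
    have hp'path : p'.IsPath := hp₂.cons hup₂
    by_cases hws : w ∈ p'.support
    · -- build a cycle
      set q := p'.takeUntil w hws with hq
      have hqpath : q.IsPath := hp'path.takeUntil hws
      have hnoedge : s(a, w) ∉ q.edges := by
        intro hmem
        have : s(a, w) ∈ p'.edges := SimpleGraph.Walk.edges_takeUntil_subset p' hws hmem
        rw [hp', SimpleGraph.Walk.edges_cons, List.mem_cons] at this
        rcases this with h | h
        · rw [Sym2.eq_iff] at h
          rcases h with ⟨_, h2⟩ | ⟨h1, _⟩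
          · exact hwv₂ h2
          · exact h₂.ne h1
        · exact hup₂ (SimpleGraph.Walk.fst_mem_support_of_mem_edges p₂ h)
      set c : H.Walk a a := SimpleGraph.Walk.cons hw q.reverse with hc
      have hcyc : c.IsCycle := by
        rw [hc, SimpleGraph.Walk.cons_isCycle_iff]
        refine ⟨hqpath.reverse, ?_⟩
        rwa [SimpleGraph.Walk.edges_reverse, List.mem_reverse]
      have hcyc' : (c.mapLe hle).IsCycle := hcyc.mapLe hle
      obtain ⟨i, j, hij, hbi, hbj⟩ := hsd a (c.mapLe hle) hcyc'
      have hedges : (c.mapLe hle).edges = c.edges := by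
        have hcoe : (⇑(SimpleGraph.Hom.ofLE hle) : V → V) = id := rfl
        simp [SimpleGraph.Walk.mapLe, SimpleGraph.Walk.edges_map, hcoe, Sym2.map_id,
          List.map_id]
      rw [hedges] at hij
      have hHij : H.Adj i j := (SimpleGraph.Walk.edges_subset_edgeSet c hij : _)
      rcases hHij.2 with h | h
      · exact h (hblack hbi)
      · exact h (hblack hbj)
    · -- extend the path, contradicting maximality
      have hlong : P (N + 1) :=
        ⟨w, b, SimpleGraph.Walk.cons hw.symm p', hp'path.cons hws, by
          rw [SimpleGraph.Walk.length_cons, hlen]⟩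
      have hbound : N + 1 ≤ Fintype.card V := by
        obtain ⟨_, _, r, hr, hrlen⟩ := hlong
        have := hr.length_lt
        omega
      exact Nat.findGreatest_is_greatest (Nat.lt_succ_self N) hbound hlong
end

section
/- Let A be a stably dissipative real n×n matrix, let i be a white vertex of G_A with exactly one neighbour i′, and let T_i(A) be the trimmed matrix. Then T_i(A) is stably dissipative and its graph G_{T_i(A)} is the trimmed graph T_i(G_A), obtained from G_A by removing every edge incident with i′ other than the edge {i, i′}. -/
open Matrix

/-- The trimmed matrix `T_i(A)`: every entry of row `i'` is set to zero except
`a_{i'i}` and `a_{i'i'}`, and every entry of column `i'` is set to zero except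
`a_{ii'}` and `a_{i'i'}`. -/
def trimMatrix {n : ℕ} (A : Matrix (Fin n) (Fin n) ℝ) (i i' : Fin n) :
    Matrix (Fin n) (Fin n) ℝ :=
  fun k l =>
    if k = i' then (if l = i ∨ l = i' then A k l else 0)
    else if l = i' then (if k = i then A k l else 0)
    else A k l

/-- The trimmed graph `T_i(G)`: remove from `G` every edge incident with `i'`
other than the edge `{i, i'}`. -/
def trimGraph {V : Type*} (G : SimpleGraph V) (i i' : V) : SimpleGraph V where
  Adj k l := G.Adj k l ∧ ((k ≠ i' ∧ l ≠ i') ∨ (k = i ∧ l = i') ∨ (k = i' ∧ l = i))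
  symm := by
    constructor
    intro k l h
    exact ⟨h.1.symm, by tauto⟩
  loopless := by
    constructor
    intro k h
    exact G.loopless.irrefl k h.1

private lemma linear_slope_zero {b c : ℝ} (h : ∀ t : ℝ, t * c + b ≤ 0) : c = 0 := by
  by_contra hc
  have := h ((1 - b) / c)
  rw [div_mul_cancel₀ _ hc] at this
  linarith

private lemma sum_pair_support {n : ℕ} {i i' : Fin n} (h : i ≠ i')
    (g : Fin n → Fin n → ℝ)
    (hg : ∀ k l, g k l ≠ 0 → (k = i ∨ k = i') ∧ (l = i ∨ l = i')) :
    ∑ k, ∑ l, g k l = g i i + g i i' + g i' i + g i' i' := by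
  have inner : ∀ k, ∑ l, g k l = g k i + g k i' := by
    intro k
    have h1 : ∑ l, g k l = ∑ l ∈ ({i, i'} : Finset (Fin n)), g k l := by
      refine (Finset.sum_subset (Finset.subset_univ _) ?_).symm
      intro l _ hl
      by_contra hne
      rcases (hg k l hne).2 with rfl | rfl <;> simp at hl
    rw [h1, Finset.sum_pair h]
  have h2 : ∑ k, ∑ l, g k l = ∑ k ∈ ({i, i'} : Finset (Fin n)), ∑ l, g k l := by
    refine (Finset.sum_subset (Finset.subset_univ _) ?_).symm
    intro k _ hk
    refine Finset.sum_eq_zero fun l _ => ?_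
    by_contra hne
    rcases (hg k l hne).1 with rfl | rfl <;> simp at hk
  rw [h2, Finset.sum_pair h, inner, inner]
  ring

set_option maxHeartbeats 1000000 in
/-- Let `A` be stably dissipative, and let `i` be a white vertex of `G_A` with
exactly one neighbour `i'` (a ∘-endpoint).  Then the trimmed matrix `T_i(A)`
is stably dissipative, its graph is the trimmed graph `T_i(G_A)`, and its
diagonal (hence the vertex colouring) is unchanged. -/
theorem stmt12 {n : ℕ} (A : Matrix (Fin n) (Fin n) ℝ)
    (hA : IsStablyDissipative A) (i i' : Fin n)
    (hwhite : A i i = 0)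
    (hadj : (graphOf A).Adj i i')
    (huniq : ∀ j, (graphOf A).Adj i j → j = i') :
    IsStablyDissipative (trimMatrix A i i') ∧
    graphOf (trimMatrix A i i') = trimGraph (graphOf A) i i' ∧
    ∀ k, trimMatrix A i i' k k = A k k := by
  classical
  obtain ⟨ε, hε, hstab⟩ := hA
  have hii' : i ≠ i' := hadj.1
  -- `i` has no neighbours other than `i'`
  have hAil : ∀ l, l ≠ i → l ≠ i' → A i l = 0 := by
    intro l h1 h2
    by_contra hc
    exact h2 (huniq l ⟨h1.symm, Or.inl hc⟩)
  have hAli : ∀ l, l ≠ i → l ≠ i' → A l i = 0 := by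
    intro l h1 h2
    by_contra hc
    exact h2 (huniq l ⟨h1.symm, Or.inr hc⟩)
  -- description of the trimmed matrix
  have hT : ∀ k l, trimMatrix A i i' k l =
      if (k = i' ∧ ¬(l = i ∨ l = i')) ∨ (k ≠ i' ∧ l = i' ∧ k ≠ i) then 0 else A k l := by
    intro k l
    unfold trimMatrix
    by_cases hk : k = i' <;> by_cases hl : l = i' <;> by_cases hli : l = i <;>
      by_cases hki : k = i <;> simp_all
  refine ⟨⟨ε, hε, ?_⟩, ?_, ?_⟩
  · -- stable dissipativity of the trimmed matrix
    intro B hpat hclose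
    set P : Fin n → Fin n → Prop := fun k l =>
      (k = i' ∧ ¬(l = i ∨ l = i')) ∨ (k ≠ i' ∧ l = i' ∧ k ≠ i) with hP
    set C : Matrix (Fin n) (Fin n) ℝ := fun k l => if P k l then A k l else B k l with hC
    have hCpat : ∀ k l, C k l = 0 ↔ A k l = 0 := by
      intro k l
      by_cases hp : P k l
      · simp [hC, hp]
      · have := hpat k l
        rw [hT k l, if_neg hp] at this
        simp [hC, hp, this]
    have hCclose : ∀ k l, |A k l - C k l| < ε := by
      intro k l
      by_cases hp : P k l
      · simpa [hC, hp] using hε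
      · have := hclose k l
        rw [hT k l, if_neg hp] at this
        simpa [hC, hp] using this
    obtain ⟨d, hd, hQ⟩ := hstab C hCpat hCclose
    -- entries of B vanishing by the zero pattern
    have hBzero : ∀ k l, trimMatrix A i i' k l = 0 → B k l = 0 := by
      intro k l h; exact (hpat k l).mpr (by rw [← h])
    have hBii : B i i = 0 := by
      apply hBzero; rw [hT]; simp [hii', hwhite]
    have hBi'l : ∀ l, l ≠ i → l ≠ i' → B i' l = 0 := by
      intro l h1 h2; apply hBzero; rw [hT]; simp [h1, h2]
    have hBli' : ∀ k, k ≠ i → k ≠ i' → B k i' = 0 := by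
      intro k h1 h2; apply hBzero; rw [hT]; simp [h1, h2]
    have hBil : ∀ l, l ≠ i → l ≠ i' → B i l = 0 := by
      intro l h1 h2; apply hBzero; rw [hT]
      simp [hii', h1, h2, hAil l h1 h2]
    have hBli : ∀ k, k ≠ i → k ≠ i' → B k i = 0 := by
      intro k h1 h2; apply hBzero; rw [hT]
      simp [hii', h2, Ne.symm hii', hAli k h1 h2]
    -- C agrees with B off the trimmed positions
    have hCB : ∀ k l, ¬ P k l → C k l = B k l := fun k l hp => by simp [hC, hp]
    have hPii : ¬ P i i := by simp [hP, hii']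
    have hPii' : ¬ P i i' := by simp [hP, hii']
    have hPi'i : ¬ P i' i := by simp [hP, hii']
    have hPi'i' : ¬ P i' i' := by simp [hP]
    have hCii : C i i = 0 := by rw [hCB i i hPii]; exact hBii
    -- the cross coefficient vanishes
    have hcross : B i i' * d i' + B i' i * d i = 0 := by
      apply linear_slope_zero (b := B i' i' * d i')
      intro t
      set u : Fin n → ℝ := fun k => if k = i then t else if k = i' then 1 else 0 with hu
      have hui : u i = t := by simp [hu]
      have hui' : u i' = 1 := by simp [hu, Ne.symm hii']
      have hQu := hQ u
      rw [sum_pair_support hii' (fun k l => u k * C k l * d l * u l) ?_] at hQu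
      · rw [hui, hui', hCii, hCB i i' hPii', hCB i' i hPi'i, hCB i' i' hPi'i'] at hQu
        ring_nf at hQu ⊢
        linarith
      · intro k l hg
        constructor
        · by_contra hk
          push_neg at hk
          have : u k = 0 := by simp [hu, hk.1, hk.2]
          simp [this] at hg
        · by_contra hl
          push_neg at hl
          have : u l = 0 := by simp [hu, hl.1, hl.2]
          simp [this] at hg
    have hbneg : B i' i' * d i' ≤ 0 := by
      set u : Fin n → ℝ := fun k => if k = i' then 1 else 0 with hu
      have hui : u i = 0 := by simp [hu, hii']
      have hui' : u i' = 1 := by simp [hu]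
      have hQu := hQ u
      rw [sum_pair_support hii' (fun k l => u k * C k l * d l * u l) ?_] at hQu
      · rw [hui, hui', hCB i' i' hPi'i'] at hQu
        ring_nf at hQu ⊢
        linarith
      · intro k l hg
        constructor
        · by_contra hk
          push_neg at hk
          have : u k = 0 := by simp [hu, hk.2]
          simp [this] at hg
        · by_contra hl
          push_neg at hl
          have : u l = 0 := by simp [hu, hl.2]
          simp [this] at hg
    -- now prove B is dissipative with the same d
    refine ⟨d, hd, fun x => ?_⟩
    set y : Fin n → ℝ := Function.update x i' 0 with hy
    have hyi' : y i' = 0 := by simp [hy]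
    have hyk : ∀ k, k ≠ i' → y k = x k := by
      intro k hk; simp [hy, Function.update_of_ne hk]
    have hsupp : ∀ k l,
        (fun k l => x k * B k l * d l * x l - y k * C k l * d l * y l) k l ≠ 0 →
        (k = i ∨ k = i') ∧ (l = i ∨ l = i') := by
      intro k l hg
      by_contra hcon
      apply hg
      show x k * B k l * d l * x l - y k * C k l * d l * y l = 0
      by_cases hk : k = i'
      · have hl : ¬ (l = i ∨ l = i') := fun h => hcon ⟨Or.inr hk, h⟩
        push_neg at hl
        rw [hk, hBi'l l hl.1 hl.2, hyi']
        ring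
      · by_cases hl : l = i'
        · have hk2 : ¬ (k = i ∨ k = i') := fun h => hcon ⟨h, Or.inr hl⟩
          push_neg at hk2
          rw [hl, hBli' k hk2.1 hk, hyi']
          ring
        · have hpkl : ¬ P k l := by simp [hP, hk, hl]
          rw [hyk k hk, hyk l hl, hCB k l hpkl]
          ring
    have hdiff := sum_pair_support hii'
      (fun k l => x k * B k l * d l * x l - y k * C k l * d l * y l) hsupp
    simp only [Finset.sum_sub_distrib] at hdiff
    simp only [hyi', hyk i hii', hCii, hBii, mul_zero, zero_mul, sub_zero, zero_sub,
      add_zero, zero_add, neg_zero] at hdiff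
    have hzero : x i * B i i' * d i' * x i' + x i' * B i' i * d i * x i = 0 := by
      linear_combination (x i * x i') * hcross
    have hneg : x i' * B i' i' * d i' * x i' ≤ 0 := by
      nlinarith [hbneg, mul_self_nonneg (x i')]
    have hGle : ∑ k, ∑ l, y k * C k l * d l * y l ≤ 0 := hQ y
    ring_nf at hdiff
    nlinarith [hdiff, hzero, hneg, hGle]
  · -- graph equality
    have hTne : ∀ k l : Fin n, trimMatrix A i i' k l ≠ 0 ↔
        (¬((k = i' ∧ ¬(l = i ∨ l = i')) ∨ (k ≠ i' ∧ l = i' ∧ k ≠ i)) ∧ A k l ≠ 0) := by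
      intro k l
      rw [hT]
      by_cases hp : (k = i' ∧ ¬(l = i ∨ l = i')) ∨ (k ≠ i' ∧ l = i' ∧ k ≠ i) <;> simp [hp] <;> tauto
    ext k l
    show (k ≠ l ∧ (trimMatrix A i i' k l ≠ 0 ∨ trimMatrix A i i' l k ≠ 0)) ↔
        ((k ≠ l ∧ (A k l ≠ 0 ∨ A l k ≠ 0)) ∧
          ((k ≠ i' ∧ l ≠ i') ∨ (k = i ∧ l = i') ∨ (k = i' ∧ l = i)))
    rw [hTne, hTne]
    have hck : ¬ (k = i ∧ k = i') := fun h => hii' (h.1.symm.trans h.2)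
    have htr1 : k = i' → l = i' → k = l := fun a b => a.trans b.symm
    have htr2 : k = i → l = i → k = l := fun a b => a.trans b.symm
    have hcl : ¬ (l = i ∧ l = i') := fun h => hii' (h.1.symm.trans h.2)
    clear hT hTne hstab huniq hadj hAil hAli hwhite hε
    by_cases hk : k = i' <;> by_cases hl : l = i' <;>
      by_cases hki : k = i <;> by_cases hli : l = i <;>
      simp only [hk, hl, hki, hli, hii', Ne.symm hii', ne_eq, not_false_iff, not_true,
        eq_self_iff_true, true_and, and_true, false_and, and_false, true_or, or_true,
        false_or, or_false, not_not] <;> tauto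
  · intro k
    rw [hT]
    by_cases hk : k = i' <;> simp [hk]
end

section
/- Let A be a stably dissipative real n×n matrix and let i be a white vertex of G_A with exactly one neighbour i′. Then the trimmed matrix T_i(A) has the same rank as A: rank(T_i(A)) = rank(A). -/
open Matrix

/-- Let `A` be stably dissipative and let `i` be a white vertex of `G_A` with
exactly one neighbour `i'` (a ∘-endpoint).  Then the trimmed matrix has the
same rank as `A`. -/
theorem stmt13 {n : ℕ} (A : Matrix (Fin n) (Fin n) ℝ)
    (hA : IsStablyDissipative A) (i i' : Fin n)
    (hwhite : A i i = 0)
    (hadj : (graphOf A).Adj i i')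
    (huniq : ∀ j, (graphOf A).Adj i j → j = i') :
    (trimMatrix A i i').rank = A.rank := by
  classical
  obtain ⟨ε, hε, hstab⟩ := hA
  obtain ⟨d, dpos, hq⟩ : IsDissipative A :=
    hstab A (fun _ _ => Iff.rfl) (fun i j => by simpa using hε)
  have hii' : i ≠ i' := (show i ≠ i' ∧ (A i i' ≠ 0 ∨ A i' i ≠ 0) from hadj).1
  -- key relation from dissipativity and white vertex
  have key : ∀ j : Fin n, A i j * d j + A j i * d i = 0 := by
    intro j
    rcases eq_or_ne j i with rfl | hji
    · simp [hwhite]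
    · set s := A i j * d j + A j i * d i with hs
      by_contra hsne
      have hlin : ∀ t : ℝ, t * s + A j j * d j ≤ 0 := by
        intro t
        have h := hq (fun k => t * (if k = i then 1 else 0) + (if k = j then 1 else 0))
        have hexp : (∑ k, ∑ l,
            (t * (if k = i then 1 else 0) + (if k = j then 1 else 0)) * A k l * d l *
              (t * (if l = i then 1 else 0) + (if l = j then 1 else 0)))
            = t * s + A j j * d j := by
          simp only [add_mul, mul_add, Finset.sum_add_distrib, mul_ite, ite_mul,
            mul_one, mul_zero, zero_mul, one_mul, Finset.sum_ite_eq, Finset.sum_ite_eq',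
            Finset.mem_univ, if_true, hji, hji.symm, if_false, hwhite, hs]
          ring
        rw [hexp] at h
        exact h
      have h := hlin ((1 - A j j * d j) / s)
      rw [div_mul_cancel₀ _ hsne] at h
      linarith
  have hrel := key i'
  have ha : A i i' ≠ 0 := by
    intro h0
    rw [h0, zero_mul, zero_add] at hrel
    have hb0 : A i' i = 0 := by
      rcases mul_eq_zero.mp hrel with h | h
      · exact h
      · exact absurd h (dpos i).ne'
    rcases (show i ≠ i' ∧ (A i i' ≠ 0 ∨ A i' i ≠ 0) from hadj).2 with h | h
    · exact h h0
    · exact h hb0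
  have hb : A i' i ≠ 0 := by
    intro h0
    rw [h0, zero_mul, add_zero] at hrel
    rcases mul_eq_zero.mp hrel with h | h
    · exact ha h
    · exact absurd h (dpos i').ne'
  have hz : ∀ j, j ≠ i → j ≠ i' → A i j = 0 ∧ A j i = 0 := by
    intro j hji hji'
    constructor
    · by_contra h
      exact hji' (huniq j (show i ≠ j ∧ (A i j ≠ 0 ∨ A j i ≠ 0) from ⟨hji.symm, Or.inl h⟩))
    · by_contra h
      exact hji' (huniq j (show i ≠ j ∧ (A i j ≠ 0 ∨ A j i ≠ 0) from ⟨hji.symm, Or.inr h⟩))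
  have hrowi : ∀ l, l ≠ i' → A i l = 0 := by
    intro l hl
    rcases eq_or_ne l i with rfl | hli
    · exact hwhite
    · exact (hz l hli hl).1
  have hcoli : ∀ k, k ≠ i' → A k i = 0 := by
    intro k hk
    rcases eq_or_ne k i with rfl | hki
    · exact hwhite
    · exact (hz k hki hk).2
  -- elimination matrices
  set v : Fin n → ℝ := fun k => if k = i ∨ k = i' then 0 else -(A k i' / A i i') with hv
  set w : Fin n → ℝ := fun l => if l = i ∨ l = i' then 0 else -(A i' l / A i' i) with hw
  set N : Matrix (Fin n) (Fin n) ℝ := fun k m => if m = i then v k else 0 with hN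
  set M : Matrix (Fin n) (Fin n) ℝ := fun m l => if m = i then w l else 0 with hM
  have hvi : v i = 0 := by simp [hv]
  have hwi : w i = 0 := by simp [hw]
  have hNB : ∀ (B : Matrix (Fin n) (Fin n) ℝ) k l, (N * B) k l = v k * B i l := by
    intro B k l
    rw [mul_apply]
    simp [hN, ite_mul, Finset.sum_ite_eq']
  have hAM : ∀ k l, (A * M) k l = A k i * w l := by
    intro k l
    rw [mul_apply]
    simp [hM, mul_ite, Finset.sum_ite_eq']
  have hN2 : N * N = 0 := by
    ext k l
    rw [hNB]
    simp [hN, hvi]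
  have hM2 : M * M = 0 := by
    ext k l
    rw [mul_apply]
    simp [hM, mul_ite, ite_mul, Finset.sum_ite_eq', hwi]
  have hE : (1 - N) * (1 + N) = 1 := by
    have h : (1 - N) * (1 + N) = 1 - N * N := by noncomm_ring
    rw [h, hN2, sub_zero]
  have hF : (1 - M) * (1 + M) = 1 := by
    have h : (1 - M) * (1 + M) = 1 - M * M := by noncomm_ring
    rw [h, hM2, sub_zero]
  have hdetE : IsUnit (1 + N).det := isUnit_det_of_left_inverse hE
  have hdetF : IsUnit (1 + M).det := isUnit_det_of_left_inverse hF
  have heq : trimMatrix A i i' = (1 + N) * A * (1 + M) := by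
    have h1 : (1 + N) * A * (1 + M) = A + N * A + (A * M + N * (A * M)) := by noncomm_ring
    have h2 : N * (A * M) = 0 := by
      ext k l
      rw [hNB, hAM, hwhite, zero_mul, mul_zero]
      rfl
    rw [h1, h2, add_zero]
    ext k l
    rw [Matrix.add_apply, Matrix.add_apply, hNB, hAM]
    unfold trimMatrix
    by_cases hk : k = i'
    · rw [if_pos hk]
      have hvk : v k = 0 := by simp [hv, hk]
      rw [hvk, zero_mul, add_zero]
      by_cases hl : l = i ∨ l = i'
      · rw [if_pos hl]
        have hwl : w l = 0 := by simp [hw, hl]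
        rw [hwl, mul_zero, add_zero]
      · rw [if_neg hl]
        push_neg at hl
        have hwl : w l = -(A i' l / A i' i) := by simp [hw, hl.1, hl.2]
        rw [hk, hwl]
        field_simp
        ring
    · rw [if_neg hk]
      by_cases hl : l = i'
      · rw [if_pos hl]
        have hwl : w l = 0 := by simp [hw, hl]
        rw [hwl, mul_zero, add_zero]
        by_cases hki : k = i
        · rw [if_pos hki, hki, hvi, zero_mul, add_zero]
        · rw [if_neg hki]
          have hvk : v k = -(A k i' / A i i') := by simp [hv, hki, hk]
          rw [hl, hvk]
          field_simp
          ring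
      · rw [if_neg hl, hrowi l hl, mul_zero, add_zero, hcoli k hk, zero_mul, add_zero]
  rw [heq, rank_mul_eq_left_of_isUnit_det _ _ hdetF,
    rank_mul_eq_right_of_isUnit_det _ _ hdetE]
end

section
/- Let A be a dissipative real n×n matrix with positive diagonal matrix D = diag(d_1,…,d_n) witnessing dissipativity, and let q ∈ ℝⁿ₊. Define h : ℝⁿ₊ → ℝ by h(x) = ∑_{i=1}^n (x_i − q_i log x_i)/d_i. Then for every x ∈ ℝⁿ₊ the derivative of h along the vector field X_{A,q} satisfies ∑_{i=1}^n (∂h/∂x_i)(x) · (X_{A,q}(x))_i = ∑_{i,j=1}^n (a_ij/d_i)(x_i − q_i)(x_j − q_j) = (x − q)ᵀ D⁻¹ A (x − q) ≤ 0, so h is a Lyapunov function for X_{A,q}, decreasing along its orbits. -/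
open Matrix

/-- Let `A` be a dissipative matrix with positive diagonal matrix
`D = diag d` witnessing dissipativity (`xᵀ A D x ≤ 0` for all `x`), and let
`q` lie in the open positive orthant.  Then for every `x` in the open positive
orthant, the derivative of the Lyapunov function
`h(x) = ∑ i, (x i - q i * log (x i)) / d i` along the Lotka–Volterra vector
field `X_{A,q}(x) = x ∗ A(x - q)` equals
`∑ i ∑ j (a_ij / d_i) (x_i - q_i) (x_j - q_j) = (x - q)ᵀ D⁻¹ A (x - q) ≤ 0`:
`h` decreases along orbits of `X_{A,q}`. -/
theorem stmt15 {n : ℕ} (A : Matrix (Fin n) (Fin n) ℝ) (d : Fin n → ℝ)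
    (hd : ∀ i, 0 < d i)
    (hdiss : ∀ x : Fin n → ℝ, ∑ i, ∑ j, x i * A i j * d j * x j ≤ 0)
    (q : Fin n → ℝ) (hq : ∀ i, 0 < q i)
    (x : Fin n → ℝ) (hx : ∀ i, 0 < x i) :
    fderiv ℝ (fun y : Fin n → ℝ => ∑ i, (y i - q i * Real.log (y i)) / d i) x
        (fun i => x i * A.mulVec (x - q) i) =
      ∑ i, ∑ j, (A i j / d i) * (x i - q i) * (x j - q j) ∧
    (∑ i, ∑ j, (A i j / d i) * (x i - q i) * (x j - q j)) =
      (x - q) ⬝ᵥ ((Matrix.diagonal d)⁻¹ * A).mulVec (x - q) ∧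
    (x - q) ⬝ᵥ ((Matrix.diagonal d)⁻¹ * A).mulVec (x - q) ≤ 0 := by
  have hx0 : ∀ i, x i ≠ 0 := fun i => (hx i).ne'
  have hd0 : ∀ i, d i ≠ 0 := fun i => (hd i).ne'
  -- derivative of each summand
  have hterm : ∀ i : Fin n, HasFDerivAt (fun y : Fin n → ℝ => (y i - q i * Real.log (y i)) / d i)
      (((d i)⁻¹) • ((ContinuousLinearMap.proj i : (Fin n → ℝ) →L[ℝ] ℝ) -
        (q i * (x i)⁻¹) • (ContinuousLinearMap.proj i))) x := by
    intro i
    have hproj : HasFDerivAt (fun y : Fin n → ℝ => y i)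
        (ContinuousLinearMap.proj i : (Fin n → ℝ) →L[ℝ] ℝ) x :=
      hasFDerivAt_apply i x
    have hlog : HasFDerivAt (fun y : Fin n → ℝ => Real.log (y i))
        ((x i)⁻¹ • (ContinuousLinearMap.proj i : (Fin n → ℝ) →L[ℝ] ℝ)) x :=
      by have := (Real.hasDerivAt_log (hx0 i)).comp_hasFDerivAt x hproj; exact this
    have h3 := (hproj.sub (hlog.const_mul (q i))).const_mul ((d i)⁻¹)
    simp only [div_eq_inv_mul]
    convert h3 using 1
    ext v
    simp [smul_smul, mul_comm, div_eq_inv_mul]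
    · rfl
    · rfl
    · rfl
    · rfl
    · rfl
    · rw [smul_smul]
  have hsum : HasFDerivAt (fun y : Fin n → ℝ => ∑ i, (y i - q i * Real.log (y i)) / d i)
      (∑ i, ((d i)⁻¹) • ((ContinuousLinearMap.proj i : (Fin n → ℝ) →L[ℝ] ℝ) -
        (q i * (x i)⁻¹) • (ContinuousLinearMap.proj i))) x :=
    HasFDerivAt.fun_sum fun i _ => hterm i
  have hfd := hsum.fderiv
  refine ⟨?_, ?_, ?_⟩
  · rw [hfd]
    rw [ContinuousLinearMap.sum_apply]
    refine Finset.sum_congr rfl fun i _ => ?_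
    have hmv : A.mulVec (x - q) i = ∑ j, A i j * (x j - q j) := by
      simp [Matrix.mulVec, dotProduct, Pi.sub_apply]
    simp only [ContinuousLinearMap.smul_apply, ContinuousLinearMap.sub_apply,
      ContinuousLinearMap.proj_apply, smul_eq_mul, hmv, Finset.mul_sum]
    rw [← Finset.sum_sub_distrib, Finset.mul_sum]
    refine Finset.sum_congr rfl fun j _ => ?_
    have hxi := hx0 i
    have hdi := hd0 i
    field_simp
  · have hinv : (Matrix.diagonal d)⁻¹ = Matrix.diagonal (fun i => (d i)⁻¹) := by
      apply Matrix.inv_eq_right_inv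
      have h1 : (fun i => d i * (d i)⁻¹) = fun _ => (1:ℝ) :=
        funext fun i => mul_inv_cancel₀ (hd0 i)
      rw [Matrix.diagonal_mul_diagonal, h1, Matrix.diagonal_one]
    rw [hinv]
    simp only [dotProduct, Matrix.mulVec, Matrix.mul_apply, Matrix.diagonal_apply,
      Pi.sub_apply]
    refine Finset.sum_congr rfl fun i _ => ?_
    rw [Finset.mul_sum]
    refine Finset.sum_congr rfl fun j _ => ?_
    have h2 : ∑ k, (if i = k then (d i)⁻¹ else 0) * A k j = (d i)⁻¹ * A i j := by
      simp
    rw [h2]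
    have hdi := hd0 i
    field_simp
  · have hinv : (Matrix.diagonal d)⁻¹ = Matrix.diagonal (fun i => (d i)⁻¹) := by
      apply Matrix.inv_eq_right_inv
      have h1 : (fun i => d i * (d i)⁻¹) = fun _ => (1:ℝ) :=
        funext fun i => mul_inv_cancel₀ (hd0 i)
      rw [Matrix.diagonal_mul_diagonal, h1, Matrix.diagonal_one]
    have key := hdiss (fun i => (x i - q i) / d i)
    have : (x - q) ⬝ᵥ ((Matrix.diagonal d)⁻¹ * A).mulVec (x - q) =
        ∑ i, ∑ j, ((x i - q i) / d i) * A i j * d j * ((x j - q j) / d j) := by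
      rw [hinv]
      simp only [dotProduct, Matrix.mulVec, Matrix.mul_apply, Matrix.diagonal_apply,
        Pi.sub_apply]
      refine Finset.sum_congr rfl fun i _ => ?_
      rw [Finset.mul_sum]
      refine Finset.sum_congr rfl fun j _ => ?_
      have h2 : ∑ k, (if i = k then (d i)⁻¹ else 0) * A k j = (d i)⁻¹ * A i j := by
        simp
      rw [h2]
      have hdi := hd0 i
      have hdj := hd0 j
      field_simp
    rw [this]
    exact key
end
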